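/- arXiv:2010.04198 — 8 statements merged into one kernel-verified Lean document; each statement's English description precedes it below -/
import Mathlib

section
/- Let f : [0,1] → 2^[0,1] be an upper semicontinuous set-valued function (with nonempty compact values) whose graph G(f) = {(x,y) : y ∈ f(x)} is connected. Then for all 0 ≤ a ≤ b ≤ 1 there exists a connected compact subset C of G(f) ∩ ([a,b] × [0,1]) such that C intersects {a} × [0,1] and C intersects {b} × [0,1]. -/
open Set

/-- Graph of a set-valued function on [0,1]. -/
def SVGraph (f : ℝ → Set ℝ) : Set (ℝ × ℝ) :=
  {p | p.1 ∈ Icc (0:ℝ) 1 ∧ p.2 ∈ f p.1}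

/-- f has nonempty compact values contained in [0,1]. -/
def SV (f : ℝ → Set ℝ) : Prop :=
  ∀ x ∈ Icc (0:ℝ) 1, (f x).Nonempty ∧ IsCompact (f x) ∧ f x ⊆ Icc (0:ℝ) 1

/-- Upper semicontinuity on [0,1]. -/
def USC (f : ℝ → Set ℝ) : Prop :=
  ∀ x ∈ Icc (0:ℝ) 1, ∀ U : Set ℝ, IsOpen U → f x ⊆ U →
    ∃ V : Set ℝ, IsOpen V ∧ x ∈ V ∧ ∀ v ∈ V ∩ Icc (0:ℝ) 1, f v ⊆ U

/-- Weak Intermediate Value Property. -/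
def WIVP (f : ℝ → Set ℝ) : Prop :=
  ∀ x₁ ∈ Icc (0:ℝ) 1, ∀ x₂ ∈ Icc (0:ℝ) 1, x₁ ≠ x₂ → ∀ y₁ ∈ f x₁,
    ∃ y₂ ∈ f x₂, ∀ y ∈ uIcc y₁ y₂, ∃ x ∈ uIcc x₁ x₂, y ∈ f x

/-- Intermediate Value Property. -/
def IVP (f : ℝ → Set ℝ) : Prop :=
  ∀ x₁ ∈ Icc (0:ℝ) 1, ∀ x₂ ∈ Icc (0:ℝ) 1, x₁ ≠ x₂ → ∀ y₁ ∈ f x₁, ∀ y₂ ∈ f x₂, y₁ ≠ y₂ →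
    ∀ y ∈ Ioo (min y₁ y₂) (max y₁ y₂), ∃ x ∈ Ioo (min x₁ x₂) (max x₁ x₂), y ∈ f x

lemma graph_closed (f : ℝ → Set ℝ) (hSV : SV f) (husc : USC f) : IsClosed (SVGraph f) := by
  rw [← isOpen_compl_iff, isOpen_iff_mem_nhds]
  intro p hp
  by_cases h1 : p.1 ∈ Icc (0:ℝ) 1
  · have h2 : p.2 ∉ f p.1 := fun h => hp ⟨h1, h⟩
    obtain ⟨hne, hcomp, hsub⟩ := hSV p.1 h1
    obtain ⟨U, V, hU, hV, hfU, hpV, hdisj⟩ :=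
      SeparatedNhds.of_isCompact_isCompact hcomp isCompact_singleton
        (Set.disjoint_singleton_right.mpr h2)
    obtain ⟨Vx, hVx, hpVx, hprop⟩ := husc p.1 h1 U hU hfU
    rw [mem_nhds_iff]
    refine ⟨Vx ×ˢ V, ?_, hVx.prod hV, ⟨hpVx, hpV (mem_singleton _)⟩⟩
    intro q ⟨hq1, hq2⟩ hqG
    have : q.2 ∈ U := hprop q.1 ⟨hq1, hqG.1⟩ hqG.2
    exact hdisj.ne_of_mem this hq2 rfl
  · rw [mem_nhds_iff]
    refine ⟨(Icc (0:ℝ) 1 ×ˢ (univ : Set ℝ))ᶜ, ?_, (isClosed_Icc.prod isClosed_univ).isOpen_compl,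
      fun h => h1 h.1⟩
    intro q hq hqG
    exact hq ⟨hqG.1, mem_univ _⟩

lemma graph_compact (f : ℝ → Set ℝ) (hSV : SV f) (husc : USC f) : IsCompact (SVGraph f) := by
  refine IsCompact.of_isClosed_subset
    ((isCompact_Icc.prod isCompact_Icc : IsCompact (Icc (0:ℝ) 1 ×ˢ Icc (0:ℝ) 1)))
    (graph_closed f hSV husc) ?_
  intro p hp
  exact ⟨hp.1, (hSV p.1 hp.1).2.2 hp.2⟩

theorem stmt0 (f : ℝ → Set ℝ) (hSV : SV f) (husc : USC f)
    (hconn : IsConnected (SVGraph f)) :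
    ∀ a b : ℝ, 0 ≤ a → a ≤ b → b ≤ 1 →
      ∃ C : Set (ℝ × ℝ), C ⊆ SVGraph f ∩ Icc a b ×ˢ Icc (0:ℝ) 1 ∧
        IsConnected C ∧ IsCompact C ∧
        (C ∩ {p : ℝ × ℝ | p.1 = a}).Nonempty ∧
        (C ∩ {p : ℝ × ℝ | p.1 = b}).Nonempty := by
  intro a b ha hab hb1
  have haI : a ∈ Icc (0:ℝ) 1 := ⟨ha, hab.trans hb1⟩
  have hbI : b ∈ Icc (0:ℝ) 1 := ⟨ha.trans hab, hb1⟩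
  obtain ⟨ya, hya⟩ := (hSV a haI).1
  obtain ⟨yb, hyb⟩ := (hSV b hbI).1
  have hyaI : ya ∈ Icc (0:ℝ) 1 := (hSV a haI).2.2 hya
  have hybI : yb ∈ Icc (0:ℝ) 1 := (hSV b hbI).2.2 hyb
  by_cases hab' : a = b
  · subst hab'
    refine ⟨{(a, ya)}, ?_, isConnected_singleton, isCompact_singleton,
      ⟨(a, ya), rfl, rfl⟩, ⟨(a, ya), rfl, rfl⟩⟩
    simp only [singleton_subset_iff, mem_inter_iff]
    exact ⟨⟨haI, hya⟩, ⟨⟨le_refl a, le_refl a⟩, hyaI⟩⟩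
  have hlt : a < b := lt_of_le_of_ne hab hab'
  set K : Set (ℝ × ℝ) := SVGraph f ∩ Icc a b ×ˢ Icc (0:ℝ) 1 with hK
  have hKcomp : IsCompact K := (graph_compact f hSV husc).inter_right
    (isClosed_Icc.prod isClosed_Icc)
  have hpaK : (a, ya) ∈ K := ⟨⟨haI, hya⟩, ⟨le_refl a, hab⟩, hyaI⟩
  have hpbK : (b, yb) ∈ K := ⟨⟨hbI, hyb⟩, ⟨hab, le_refl b⟩, hybI⟩
  haveI : CompactSpace K := isCompact_iff_compactSpace.mp hKcomp
  -- The key claim: some connected component of K connects the two walls.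
  have claim : ∃ p ∈ K, p.1 = a ∧
      (connectedComponentIn K p ∩ {q : ℝ × ℝ | q.1 = b}).Nonempty := by
    by_contra hcon
    push_neg at hcon
    have hcon' : ∀ p : K, (p : ℝ × ℝ).1 = a →
        connectedComponent p ∩ {q : K | (q : ℝ × ℝ).1 = b} = ∅ := by
      intro p hpa
      rw [eq_empty_iff_forall_notMem]
      rintro q ⟨hq1, hq2⟩
      have h0 := hcon p p.2 hpa
      refine (eq_empty_iff_forall_notMem.mp h0) (q : ℝ × ℝ) ⟨?_, hq2⟩
      rw [connectedComponentIn_eq_image p.2]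
      exact mem_image_of_mem _ (by simpa using hq1)
    -- For each wall-a point, find a clopen set containing it, disjoint from wall-b
    have hBclosed : IsClosed {q : K | (q : ℝ × ℝ).1 = b} :=
      isClosed_eq (continuous_fst.comp continuous_subtype_val) continuous_const
    have hBcomp : IsCompact {q : K | (q : ℝ × ℝ).1 = b} := hBclosed.isCompact
    have step1 : ∀ p : K, (p : ℝ × ℝ).1 = a → ∃ Z : Set K, IsClopen Z ∧ p ∈ Z ∧
        Z ∩ {q : K | (q : ℝ × ℝ).1 = b} = ∅ := by
      intro p hpa
      have h1 := hcon' p hpa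
      rw [connectedComponent_eq_iInter_isClopen p] at h1
      have h2 : {q : K | (q : ℝ × ℝ).1 = b} ∩
          ⋂ s : { s : Set K // IsClopen s ∧ p ∈ s }, (s : Set K) = ∅ := by
        rw [inter_comm]; exact h1
      obtain ⟨u, hu⟩ := hBcomp.elim_finite_subfamily_closed _
        (fun s : { s : Set K // IsClopen s ∧ p ∈ s } => s.2.1.1) h2
      refine ⟨⋂ i ∈ u, (i : Set K), isClopen_biInter_finset fun i _ => i.2.1, ?_, ?_⟩
      · exact mem_iInter₂.mpr fun i _ => i.2.2
      · rw [inter_comm]; exact hu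
    choose! Z hZclopen hZmem hZdisj using step1
    -- Cover the wall-a set by finitely many such clopens
    set A' : Set K := {q : K | (q : ℝ × ℝ).1 = a} with hA'
    have hA'closed : IsClosed A' :=
      isClosed_eq (continuous_fst.comp continuous_subtype_val) continuous_const
    have hA'comp : IsCompact A' := hA'closed.isCompact
    obtain ⟨t, ht⟩ := hA'comp.elim_finite_subcover (fun p : A' => Z p)
      (fun p => (hZclopen p p.2).2) (fun q hq => mem_iUnion.mpr ⟨⟨q, hq⟩, hZmem q hq⟩)
    set W : Set K := ⋃ i ∈ t, Z i with hW
    have hWclopen : IsClopen W := isClopen_biUnion_finset fun i _ => hZclopen i i.2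
    have hAW : A' ⊆ W := ht
    have hWB : W ∩ {q : K | (q : ℝ × ℝ).1 = b} = ∅ := by
      rw [eq_empty_iff_forall_notMem]
      rintro q ⟨hq1, hq2⟩
      obtain ⟨i, hi, hqi⟩ := mem_iUnion₂.mp hq1
      exact (eq_empty_iff_forall_notMem.mp (hZdisj i i.2)) q ⟨hqi, hq2⟩
    -- Build the disconnection of the graph
    set K₁ : Set (ℝ × ℝ) := Subtype.val '' W with hK₁
    set K₂ : Set (ℝ × ℝ) := Subtype.val '' Wᶜ with hK₂
    have hK₁comp : IsCompact K₁ :=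
      (hWclopen.1.isCompact).image continuous_subtype_val
    have hK₂comp : IsCompact K₂ :=
      ((hWclopen.2.isClosed_compl).isCompact).image continuous_subtype_val
    set G₁ : Set (ℝ × ℝ) := (SVGraph f ∩ {q : ℝ × ℝ | q.1 ≤ a}) ∪ K₁ with hG₁
    set G₂ : Set (ℝ × ℝ) := K₂ ∪ (SVGraph f ∩ {q : ℝ × ℝ | b ≤ q.1}) with hG₂
    have hG₁closed : IsClosed G₁ :=
      ((graph_closed f hSV husc).inter (isClosed_le continuous_fst continuous_const)).union
        hK₁comp.isClosed
    have hG₂closed : IsClosed G₂ :=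
      hK₂comp.isClosed.union
        ((graph_closed f hSV husc).inter (isClosed_le continuous_const continuous_fst))
    have hcover : SVGraph f ⊆ G₁ ∪ G₂ := by
      intro q hq
      rcases le_or_gt q.1 a with h | h
      · exact Or.inl (Or.inl ⟨hq, h⟩)
      rcases le_or_gt b q.1 with h' | h'
      · exact Or.inr (Or.inr ⟨hq, h'⟩)
      have hqK : q ∈ K := ⟨hq, ⟨h.le, h'.le⟩, (hSV q.1 hq.1).2.2 hq.2⟩
      by_cases hw : (⟨q, hqK⟩ : K) ∈ W
      · exact Or.inl (Or.inr ⟨⟨q, hqK⟩, hw, rfl⟩)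
      · exact Or.inr (Or.inl ⟨⟨q, hqK⟩, hw, rfl⟩)
    have hne1 : (SVGraph f ∩ G₁).Nonempty :=
      ⟨(a, ya), ⟨haI, hya⟩, Or.inl ⟨⟨haI, hya⟩, le_refl a⟩⟩
    have hne2 : (SVGraph f ∩ G₂).Nonempty :=
      ⟨(b, yb), ⟨hbI, hyb⟩, Or.inr ⟨⟨hbI, hyb⟩, le_refl b⟩⟩
    obtain ⟨q, hqG, hq1, hq2⟩ := isPreconnected_closed_iff.mp hconn.isPreconnected
      G₁ G₂ hG₁closed hG₂closed hcover hne1 hne2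
    -- Derive the contradiction
    have hwallA : ∀ r : ℝ × ℝ, r ∈ K → r.1 = a → ∀ h : r ∈ K, (⟨r, h⟩ : K) ∈ W :=
      fun r hrK hra h => hAW hra
    rcases hq1 with hq1 | hq1 <;> rcases hq2 with hq2 | hq2
    · -- x ≤ a and in K₂
      obtain ⟨w, hwW, hwq⟩ := hq2
      have hra : (w : ℝ × ℝ).1 = a := le_antisymm (hwq ▸ hq1.2) (w.2.2.1.1)
      exact hwW (hAW hra)
    · -- x ≤ a and b ≤ x
      exact absurd (hq1.2.trans_lt hlt) (not_lt.mpr hq2.2)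
    · -- in K₁ and K₂
      obtain ⟨w, hwW, hwq⟩ := hq1
      obtain ⟨w', hw'W, hw'q⟩ := hq2
      have : w = w' := Subtype.ext (hwq.trans hw'q.symm)
      exact hw'W (this ▸ hwW)
    · -- in K₁ and b ≤ x
      obtain ⟨w, hwW, hwq⟩ := hq1
      have hrb : (w : ℝ × ℝ).1 = b := le_antisymm (w.2.2.1.2) (hwq ▸ hq2.2)
      exact (eq_empty_iff_forall_notMem.mp hWB) w ⟨hwW, hrb⟩
  -- Use the claim to build C
  obtain ⟨p, hpK, hpa, hpb⟩ := claim
  refine ⟨connectedComponentIn K p, ?_, ?_, ?_, ?_, ?_⟩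
  · exact (connectedComponentIn_subset K p)
  · exact isConnected_connectedComponentIn_iff.mpr hpK
  · rw [connectedComponentIn_eq_image hpK]
    exact (isClosed_connectedComponent.isCompact).image continuous_subtype_val
  · exact ⟨p, mem_connectedComponentIn hpK, hpa⟩
  · exact hpb
end

section
/- Let f : [0,1] → 2^[0,1] be upper semicontinuous with connected graph G(f). If f(x) is connected for every x ∈ [0,1], then f has the Weak Intermediate Value Property. -/
open Set

theorem stmt3 (f : ℝ → Set ℝ) (hSV : SV f) (husc : USC f)
    (hconn : IsConnected (SVGraph f))
    (hvals : ∀ x ∈ Icc (0:ℝ) 1, IsConnected (f x)) :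
    WIVP f := by
  intro x₁ hx₁ x₂ hx₂ hne y₁ hy₁
  have hIsub : uIcc x₁ x₂ ⊆ Icc (0:ℝ) 1 := by
    rw [uIcc_eq_union]
    exact union_subset (Icc_subset_Icc hx₁.1 hx₂.2) (Icc_subset_Icc hx₂.1 hx₁.2)
  set S : Set (ℝ × ℝ) := SVGraph f ∩ (uIcc x₁ x₂ ×ˢ univ) with hSdef
  have hSsub : S ⊆ Icc (0:ℝ) 1 ×ˢ Icc (0:ℝ) 1 := fun p hp =>
    ⟨hp.1.1, (hSV p.1 hp.1.1).2.2 hp.1.2⟩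
  have hSclosed : IsClosed S :=
    (graph_closed f hSV husc).inter ((isClosed_Icc : IsClosed (uIcc x₁ x₂)).prod isClosed_univ)
  have hScpt : IsCompact S :=
    (isCompact_Icc.prod isCompact_Icc).of_isClosed_subset hSclosed hSsub
  haveI : CompactSpace ↥S := isCompact_iff_compactSpace.mp hScpt
  have hp0 : ((x₁, y₁) : ℝ × ℝ) ∈ S := ⟨⟨hx₁, hy₁⟩, left_mem_uIcc, mem_univ _⟩
  set p0 : ↥S := ⟨(x₁, y₁), hp0⟩ with hp0def
  set B : Set ↥S := {q | (q : ℝ × ℝ).1 = x₂} with hBdef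
  have hcontπ : Continuous (fun q : ↥S => (q : ℝ × ℝ).1) :=
    continuous_fst.comp continuous_subtype_val
  have hcontπ2 : Continuous (fun q : ↥S => (q : ℝ × ℝ).2) :=
    continuous_snd.comp continuous_subtype_val
  have hmeet : (connectedComponent p0 ∩ B).Nonempty := by
    by_contra hdis
    rw [not_nonempty_iff_eq_empty] at hdis
    have hBclosed : IsClosed B := isClosed_eq hcontπ continuous_const
    have hBcpt : IsCompact B := hBclosed.isCompact
    have hempty : (B ∩ ⋂ Z : {Z : Set ↥S // IsClopen Z ∧ p0 ∈ Z}, (Z : Set ↥S)) = ∅ := by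
      rw [← connectedComponent_eq_iInter_isClopen p0, inter_comm]
      exact hdis
    obtain ⟨t, ht⟩ := hBcpt.elim_finite_subfamily_closed _
      (fun Z : {Z : Set ↥S // IsClopen Z ∧ p0 ∈ Z} => Z.2.1.isClosed) hempty
    set K : Set ↥S := ⋂ Z ∈ t, (Z : Set ↥S) with hKdef
    have hK : IsClopen K := isClopen_biInter_finset fun Z _ => Z.2.1
    have hp0K : p0 ∈ K := mem_iInter₂.mpr fun Z _ => Z.2.2
    have hKB : ∀ q ∈ K, q ∉ B := by
      intro q hqK hqB
      have : q ∈ B ∩ ⋂ Z ∈ t, (Z : Set ↥S) := ⟨hqB, hqK⟩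
      rw [ht] at this
      exact this
    set A1 : Set ℝ := (fun q : ↥S => (q : ℝ × ℝ).1) '' K with hA1def
    set A2 : Set ℝ := (fun q : ↥S => (q : ℝ × ℝ).1) '' Kᶜ with hA2def
    have hA1 : IsClosed A1 := ((hK.isClosed.isCompact).image hcontπ).isClosed
    have hA2 : IsClosed A2 := ((hK.compl.isClosed.isCompact).image hcontπ).isClosed
    have hcover : uIcc x₁ x₂ ⊆ A1 ∪ A2 := by
      intro x hx
      obtain ⟨y, hy⟩ := (hSV x (hIsub hx)).1
      have hq : ((x, y) : ℝ × ℝ) ∈ S := ⟨⟨hIsub hx, hy⟩, hx, mem_univ _⟩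
      by_cases h : (⟨(x, y), hq⟩ : ↥S) ∈ K
      · exact Or.inl ⟨_, h, rfl⟩
      · exact Or.inr ⟨_, h, rfl⟩
    have h1 : (uIcc x₁ x₂ ∩ A1).Nonempty := ⟨x₁, left_mem_uIcc, ⟨p0, hp0K, rfl⟩⟩
    have h2 : (uIcc x₁ x₂ ∩ A2).Nonempty := by
      obtain ⟨y₂', hy₂'⟩ := (hSV x₂ hx₂).1
      have hq : ((x₂, y₂') : ℝ × ℝ) ∈ S := ⟨⟨hx₂, hy₂'⟩, right_mem_uIcc, mem_univ _⟩
      have hnotK : (⟨(x₂, y₂'), hq⟩ : ↥S) ∉ K := fun hK' => hKB _ hK' rfl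
      exact ⟨x₂, right_mem_uIcc, ⟨_, hnotK, rfl⟩⟩
    obtain ⟨x₀, hx₀I, hx₀1, hx₀2⟩ :=
      isPreconnected_closed_iff.mp isPreconnected_uIcc A1 A2 hA1 hA2 hcover h1 h2
    obtain ⟨q1, hq1K, hq1x⟩ := hx₀1
    obtain ⟨q2, hq2K, hq2x⟩ := hx₀2
    have hx₀01 : x₀ ∈ Icc (0:ℝ) 1 := hIsub hx₀I
    set F : Set ↥S := {q | (q : ℝ × ℝ).1 = x₀} with hFdef
    have himg : Subtype.val '' F = {x₀} ×ˢ f x₀ := by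
      ext p
      constructor
      · rintro ⟨q, hqF, rfl⟩
        refine ⟨hqF, ?_⟩
        have := q.2.1.2
        rwa [show ((q : ℝ × ℝ).1) = x₀ from hqF] at this
      · rintro ⟨hp1, hp2⟩
        have hmem : p ∈ S := by
          refine ⟨⟨?_, ?_⟩, ?_, mem_univ _⟩
          · rw [show p.1 = x₀ from hp1]; exact hx₀01
          · rw [show p.1 = x₀ from hp1]; exact hp2
          · rw [show p.1 = x₀ from hp1]; exact hx₀I
        exact ⟨⟨p, hmem⟩, hp1, rfl⟩
    have hFconn : IsPreconnected F := by
      have hemb : Topology.IsInducing (Subtype.val : ↥S → ℝ × ℝ) := Topology.IsInducing.subtypeVal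
      rw [← hemb.isPreconnected_image, himg]
      have : {x₀} ×ˢ f x₀ = (fun y => ((x₀ : ℝ), y)) '' f x₀ := by
        ext p
        constructor
        · rintro ⟨hp1, hp2⟩
          exact ⟨p.2, hp2, by rw [Prod.ext_iff]; exact ⟨(mem_singleton_iff.mp hp1).symm, rfl⟩⟩
        · rintro ⟨y, hy, rfl⟩
          exact ⟨rfl, hy⟩
      rw [this]
      exact ((hvals x₀ hx₀01).isPreconnected).image _ (Continuous.continuousOn (continuous_const.prodMk continuous_id))
    have hq1F : q1 ∈ F := hq1x
    have hq2F : q2 ∈ F := hq2x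
    have : F ⊆ K := hFconn.subset_isClopen hK ⟨q1, hq1F, hq1K⟩
    exact hq2K (this hq2F)
  obtain ⟨q₂, hq₂C, hq₂B⟩ := hmeet
  refine ⟨(q₂ : ℝ × ℝ).2, ?_, ?_⟩
  · have := q₂.2.1.2
    rwa [show ((q₂ : ℝ × ℝ).1) = x₂ from hq₂B] at this
  · intro y hy
    set T : Set ℝ := (fun q : ↥S => (q : ℝ × ℝ).2) '' connectedComponent p0 with hTdef
    have hTconn : IsPreconnected T :=
      isPreconnected_connectedComponent.image _ hcontπ2.continuousOn
    have hy₁T : y₁ ∈ T := ⟨p0, mem_connectedComponent, rfl⟩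
    have hy₂T : (q₂ : ℝ × ℝ).2 ∈ T := ⟨q₂, hq₂C, rfl⟩
    have hsubT : uIcc y₁ (q₂ : ℝ × ℝ).2 ⊆ T :=
      (isPreconnected_iff_ordConnected.mp hTconn).uIcc_subset hy₁T hy₂T
    obtain ⟨q, hqC, hqy⟩ := hsubT hy
    exact ⟨(q : ℝ × ℝ).1, q.2.2.1, by rw [← hqy]; exact q.2.1.2⟩
end

section
/- Let f : [0,1] → 2^[0,1] be upper semicontinuous. If f has the Intermediate Value Property, then f(x) is connected for every x ∈ [0,1]. -/
open Set

theorem stmt4 (f : ℝ → Set ℝ) (hSV : SV f) (husc : USC f) (hivp : IVP f) :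
    ∀ x ∈ Icc (0:ℝ) 1, IsConnected (f x) := by
  intro x hx
  obtain ⟨hne, _, _⟩ := hSV x hx
  refine ⟨hne, ?_⟩
  rw [isPreconnected_iff_ordConnected]
  constructor
  intro a ha b hb c hc
  by_contra hcnot
  have hac : a < c := lt_of_le_of_ne hc.1 (by rintro rfl; exact hcnot ha)
  have hcb : c < b := lt_of_le_of_ne hc.2 (by rintro rfl; exact hcnot hb)
  obtain ⟨V, hVopen, hxV, hV⟩ := husc x hx {c}ᶜ isOpen_compl_singleton
    (fun y hy => by simp only [mem_compl_iff, mem_singleton_iff]; rintro rfl; exact hcnot hy)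
  obtain ⟨r, hr, hball⟩ := Metric.isOpen_iff.mp hVopen x hxV
  have key : ∀ x', x' ∈ Icc (0:ℝ) 1 → |x' - x| < r → x' ≠ x → False := by
    intro x' hx' hdist hne'
    obtain ⟨⟨y₂, hy₂⟩, _, _⟩ := hSV x' hx'
    have hx'V : x' ∈ V := hball (by simpa [Metric.mem_ball, Real.dist_eq] using hdist)
    have hy₂c : y₂ ≠ c := by
      have := hV x' ⟨hx'V, hx'⟩ hy₂
      simpa using this
    have habs := abs_lt.mp hdist
    have hsegV : ∀ z ∈ Ioo (min x x') (max x x'), z ∈ V ∩ Icc (0:ℝ) 1 := by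
      intro z hz
      have hz1 := hz.1
      have hz2 := hz.2
      refine ⟨hball ?_, ?_, ?_⟩
      · rw [Metric.mem_ball, Real.dist_eq, abs_lt]
        rcases le_total x x' with h | h
        · rw [min_eq_left h] at hz1; rw [max_eq_right h] at hz2
          constructor <;> linarith
        · rw [min_eq_right h] at hz1; rw [max_eq_left h] at hz2
          constructor <;> linarith
      · have : (0:ℝ) ≤ min x x' := le_min hx.1 hx'.1
        linarith [hz.1]
      · have : max x x' ≤ 1 := max_le hx.2 hx'.2
        linarith [hz.2]
    rcases lt_or_gt_of_ne hy₂c with h | h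
    · -- y₂ < c < b, use y₁ = b
      obtain ⟨xm, hxm, hcm⟩ := hivp x hx x' hx' (Ne.symm hne') b hb y₂ hy₂
        (ne_of_gt (h.trans hcb))
        c ⟨min_lt_iff.mpr (Or.inr h), lt_max_iff.mpr (Or.inl hcb)⟩
      have := hV xm (hsegV xm hxm) hcm
      simp at this
    · -- a < c < y₂, use y₁ = a
      obtain ⟨xm, hxm, hcm⟩ := hivp x hx x' hx' (Ne.symm hne') a ha y₂ hy₂
        (ne_of_lt (hac.trans h))
        c ⟨min_lt_iff.mpr (Or.inl hac), lt_max_iff.mpr (Or.inr h)⟩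
      have := hV xm (hsegV xm hxm) hcm
      simp at this
  set d := min (r/2) (1/2) with hd
  have hdpos : 0 < d := lt_min (by linarith) (by norm_num)
  have hdr : d < r := lt_of_le_of_lt (min_le_left _ _) (by linarith)
  have hdhalf : d ≤ 1/2 := min_le_right _ _
  by_cases hhalf : x ≤ 1/2
  · exact key (x + d) ⟨by linarith [hx.1], by linarith⟩
      (by rw [add_sub_cancel_left, abs_of_pos hdpos]; exact hdr)
      (by intro h; nlinarith [congrArg (· - x) h])
  · push_neg at hhalf
    exact key (x - d) ⟨by linarith, by linarith [hx.2]⟩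
      (by rw [sub_sub_cancel_left, abs_neg, abs_of_pos hdpos]; exact hdr)
      (by intro h; nlinarith [congrArg (· - x) h])
end

section
/- Let f : [0,1] → 2^[0,1] be upper semicontinuous with the Intermediate Value Property. Then for all 0 ≤ a ≤ b ≤ 1, the set G(f) ∩ ([a,b] × [0,1]) is connected. -/
open Set

/-- Each value of f is order-connected (hence connected). -/
lemma fiber_preconnected (f : ℝ → Set ℝ) (hSV : SV f) (husc : USC f) (hivp : IVP f) :
    ∀ x ∈ Icc (0:ℝ) 1, IsPreconnected (f x) := by
  intro x hx
  rw [isPreconnected_iff_ordConnected]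
  constructor
  intro y₁ hy₁ y₂ hy₂ m hm
  by_contra hm'
  have h1 : y₁ < m := lt_of_le_of_ne hm.1 (by rintro rfl; exact hm' hy₁)
  have h2 : m < y₂ := lt_of_le_of_ne hm.2 (by rintro rfl; exact hm' hy₂)
  obtain ⟨V, hVo, hxV, hV⟩ := husc x hx {m}ᶜ isOpen_compl_singleton
    (fun z hz hzm => hm' (mem_singleton_iff.mp hzm ▸ hz))
  obtain ⟨ε, hε, hball⟩ := Metric.isOpen_iff.mp hVo x hxV
  set δ : ℝ := min (ε/2) (1/2) with hδdef
  have hδ : 0 < δ := lt_min (by linarith) (by norm_num)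
  have hδε : δ < ε := lt_of_le_of_lt (min_le_left _ _) (by linarith)
  have hδh : δ ≤ 1/2 := min_le_right _ _
  -- choose x₂ ∈ [0,1], x₂ ≠ x, |x₂ - x| ≤ δ
  obtain ⟨x₂, hx₂Icc, hne, hdist⟩ :
      ∃ x₂, x₂ ∈ Icc (0:ℝ) 1 ∧ x ≠ x₂ ∧ |x₂ - x| ≤ δ := by
    by_cases hhalf : x ≤ 1/2
    · exact ⟨x + δ, ⟨by linarith [hx.1], by linarith⟩, (lt_add_of_pos_right x hδ).ne,
        by rw [add_sub_cancel_left]; exact (abs_of_pos hδ).le⟩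
    · exact ⟨x - δ, ⟨by linarith, by linarith [hx.2]⟩, (sub_lt_self x hδ).ne',
        by rw [sub_sub_cancel_left, abs_neg]; exact (abs_of_pos hδ).le⟩
  have hx₂V : x₂ ∈ V := hball (by rw [Metric.mem_ball, Real.dist_eq]; linarith)
  have hIoo : ∀ x' ∈ Ioo (min x x₂) (max x x₂), x' ∈ V ∩ Icc (0:ℝ) 1 := by
    intro x' hx'
    have hxlo : min x x₂ ≤ x := min_le_left _ _
    have hxhi : x ≤ max x x₂ := le_max_left _ _
    have habs1 : x₂ - x ≤ |x₂ - x| := le_abs_self _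
    have habs2 : -(|x₂ - x|) ≤ x₂ - x := neg_abs_le _
    have hmax : max x x₂ ≤ x + δ := max_le (by linarith) (by linarith)
    have hmin : x - δ ≤ min x x₂ := le_min (by linarith) (by linarith)
    refine ⟨hball ?_, ?_, ?_⟩
    · rw [Metric.mem_ball, Real.dist_eq, abs_lt]
      constructor <;> linarith [hx'.1, hx'.2]
    · have : (0:ℝ) ≤ min x x₂ := le_min hx.1 hx₂Icc.1
      linarith [hx'.1]
    · have : max x x₂ ≤ 1 := max_le hx.2 hx₂Icc.2
      linarith [hx'.2]
  obtain ⟨y', hy'⟩ := (hSV x₂ hx₂Icc).1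
  have hy'm : y' ≠ m := fun h => (hV x₂ ⟨hx₂V, hx₂Icc⟩ hy') (h ▸ rfl)
  rcases hy'm.lt_or_gt with hlt | hgt
  · -- y' < m ; use y₂ ∈ f x and y' ∈ f x₂, with m ∈ (y', y₂)
    obtain ⟨x', hx'Ioo, hx'f⟩ := hivp x hx x₂ hx₂Icc hne y₂ hy₂ y' hy'
      (show y' < y₂ by linarith).ne' m
      ⟨lt_of_le_of_lt (min_le_right _ _) hlt, lt_of_lt_of_le h2 (le_max_left _ _)⟩
    exact hV x' (hIoo x' hx'Ioo) hx'f rfl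
  · -- m < y' ; use y₁ ∈ f x and y' ∈ f x₂, with m ∈ (y₁, y')
    obtain ⟨x', hx'Ioo, hx'f⟩ := hivp x hx x₂ hx₂Icc hne y₁ hy₁ y' hy'
      (show y₁ < y' by linarith).ne m
      ⟨lt_of_le_of_lt (min_le_left _ _) h1, lt_of_lt_of_le hgt (le_max_right _ _)⟩
    exact hV x' (hIoo x' hx'Ioo) hx'f rfl

theorem stmt6 (f : ℝ → Set ℝ) (hSV : SV f) (husc : USC f) (hivp : IVP f) :
    ∀ a b : ℝ, 0 ≤ a → a ≤ b → b ≤ 1 →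
      IsConnected (SVGraph f ∩ Icc a b ×ˢ Icc (0:ℝ) 1) := by
  intro a b ha hab hb
  have haIcc : a ∈ Icc (0:ℝ) 1 := ⟨ha, hab.trans hb⟩
  set K := SVGraph f ∩ Icc a b ×ˢ Icc (0:ℝ) 1 with hKdef
  have hKsub : ∀ x ∈ Icc a b, ∀ y ∈ f x, (x, y) ∈ K := by
    intro x hx y hy
    have hx01 : x ∈ Icc (0:ℝ) 1 := ⟨ha.trans hx.1, hx.2.trans hb⟩
    exact ⟨⟨hx01, hy⟩, hx, (hSV x hx01).2.2 hy⟩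
  constructor
  · obtain ⟨y, hy⟩ := (hSV a haIcc).1
    exact ⟨(a, y), hKsub a ⟨le_refl a, hab⟩ y hy⟩
  · -- preconnected
    have hKcomp : IsCompact K := (isCompact_Icc.prod isCompact_Icc).inter_left
      (graph_closed f hSV husc)
    rintro u v hu hv hcover ⟨p, hpK, hpu⟩ ⟨q, hqK, hqv⟩
    by_contra hcon
    have hempty : ∀ z ∈ K, z ∈ u → z ∉ v := by
      intro z hz hzu hzv; exact hcon ⟨z, hz, hzu, hzv⟩
    set t₁ := Prod.fst '' (K ∩ vᶜ) with ht₁def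
    set t₂ := Prod.fst '' (K ∩ uᶜ) with ht₂def
    have ht₁c : IsClosed t₁ := ((hKcomp.inter_right hv.isClosed_compl).image continuous_fst).isClosed
    have ht₂c : IsClosed t₂ := ((hKcomp.inter_right hu.isClosed_compl).image continuous_fst).isClosed
    obtain ⟨x, hxab, hxt⟩ := (isPreconnected_closed_iff.mp isPreconnected_Icc) t₁ t₂ ht₁c ht₂c
      (by
        intro x hx
        have hx01 : x ∈ Icc (0:ℝ) 1 := ⟨ha.trans hx.1, hx.2.trans hb⟩
        obtain ⟨y, hy⟩ := (hSV x hx01).1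
        have hK : (x, y) ∈ K := hKsub x hx y hy
        by_cases hu' : (x, y) ∈ u
        · exact Or.inl ⟨(x, y), ⟨hK, hempty _ hK hu'⟩, rfl⟩
        · exact Or.inr ⟨(x, y), ⟨hK, hu'⟩, rfl⟩)
      ⟨p.1, hpK.2.1, ⟨p, ⟨hpK, hempty p hpK hpu⟩, rfl⟩⟩
      ⟨q.1, hqK.2.1, ⟨q, ⟨hqK, fun hqu => hempty q hqK hqu hqv⟩, rfl⟩⟩
    obtain ⟨⟨⟨w₁, y₁⟩, ⟨hp₁K, hp₁v⟩, hfst1⟩, ⟨⟨w₂, y₂⟩, ⟨hp₂K, hp₂u⟩, hfst2⟩⟩ := hxt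
    simp only at hfst1 hfst2
    rw [show w₁ = x from hfst1] at hp₁K hp₁v
    rw [show w₂ = x from hfst2] at hp₂K hp₂u
    have hx01 : x ∈ Icc (0:ℝ) 1 := ⟨ha.trans hxab.1, hxab.2.trans hb⟩
    -- the fiber over x₁
    have hFpre : IsPreconnected ((fun y => (x, y)) '' f x) :=
      (fiber_preconnected f hSV husc hivp x hx01).image _
        ((Continuous.prodMk_right x).continuousOn)
    have hFsubK : (fun y => (x, y)) '' f x ⊆ K := by
      rintro - ⟨y, hy, rfl⟩; exact hKsub x hxab y hy
    have hp₁u : (x, y₁) ∈ u := (hcover hp₁K).resolve_right hp₁v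
    have hp₂v : (x, y₂) ∈ v := (hcover hp₂K).resolve_left hp₂u
    obtain ⟨z, hzF, hzu, hzv⟩ := hFpre u v hu hv (hFsubK.trans hcover)
      ⟨(x, y₁), ⟨y₁, hp₁K.1.2, rfl⟩, hp₁u⟩ ⟨(x, y₂), ⟨y₂, hp₂K.1.2, rfl⟩, hp₂v⟩
    exact hempty z (hFsubK hzF) hzu hzv
end

section
/- Define f : [0,1] → 2^[0,1] by f(x) = {x/3} for 0 ≤ x < 1/2 and f(x) = {x/3, 2x−1} for 1/2 ≤ x ≤ 1. Then f is upper semicontinuous, surjective (every y ∈ [0,1] lies in f(x) for some x), its graph is connected, but f does not have the Weak Intermediate Value Property. -/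
open Set

/-- Graph of a set-valued function on [0,1]. -/
def SVFGraph (f : ℝ → Set ℝ) : Set (ℝ × ℝ) :=
  {p | p.1 ∈ Icc (0:ℝ) 1 ∧ p.2 ∈ f p.1}

/-- The example of Nall. -/
noncomputable def fNall (x : ℝ) : Set ℝ :=
  if x < 1/2 then {x/3} else {x/3, 2*x - 1}

lemma fNall_lt {x : ℝ} (h : x < 1/2) : fNall x = {x/3} := by
  unfold fNall; rw [if_pos h]

lemma fNall_ge {x : ℝ} (h : ¬ x < 1/2) : fNall x = {x/3, 2*x-1} := by
  unfold fNall; rw [if_neg h]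

lemma usc_aux : USC fNall := by
  intro x hx U hU hfU
  by_cases h : x < 1/2
  · rw [fNall_lt h] at hfU
    have hxU : x/3 ∈ U := hfU rfl
    refine ⟨Iio (1/2) ∩ (fun v => v/3) ⁻¹' U, isOpen_Iio.inter (hU.preimage (by fun_prop)),
      ⟨h, hxU⟩, ?_⟩
    rintro v ⟨⟨hv1, hv2⟩, _⟩
    rw [fNall_lt hv1]
    exact singleton_subset_iff.2 hv2
  · rw [fNall_ge h] at hfU
    have h1 : x/3 ∈ U := hfU (Or.inl rfl)
    have h2 : 2*x - 1 ∈ U := hfU (Or.inr rfl)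
    refine ⟨(fun v => v/3) ⁻¹' U ∩ (fun v => 2*v-1) ⁻¹' U,
      (hU.preimage (by fun_prop)).inter (hU.preimage (by fun_prop)), ⟨h1, h2⟩, ?_⟩
    rintro v ⟨⟨hv1, hv2⟩, _⟩
    by_cases hv : v < 1/2
    · rw [fNall_lt hv]; exact singleton_subset_iff.2 hv1
    · rw [fNall_ge hv]; rintro y (rfl | rfl) <;> assumption

lemma conn_aux : IsConnected (SVFGraph fNall) := by
  have hA : IsConnected ((fun x : ℝ => (x, x/3)) '' Icc 0 1) :=
    (isConnected_Icc (by norm_num)).image _ (by fun_prop)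
  have hB : IsConnected ((fun x : ℝ => (x, 2*x-1)) '' Icc (1/2) 1) :=
    (isConnected_Icc (by norm_num)).image _ (by fun_prop)
  have hEq : SVFGraph fNall = ((fun x : ℝ => (x, x/3)) '' Icc 0 1) ∪
      ((fun x : ℝ => (x, 2*x-1)) '' Icc (1/2) 1) := by
    ext ⟨a, b⟩
    constructor
    · rintro ⟨ha, hb⟩
      by_cases h : a < 1/2
      · rw [fNall_lt h, mem_singleton_iff] at hb
        exact Or.inl ⟨a, ha, congrArg (Prod.mk a) hb.symm⟩
      · rw [fNall_ge h] at hb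
        rcases hb with rfl | rfl
        · exact Or.inl ⟨a, ha, rfl⟩
        · exact Or.inr ⟨a, ⟨not_lt.1 h, ha.2⟩, rfl⟩
    · rintro (⟨x, hx, h⟩ | ⟨x, hx, h⟩) <;>
        obtain ⟨rfl, rfl⟩ := Prod.mk.injEq .. ▸ h
      · refine ⟨hx, ?_⟩
        by_cases h : x < 1/2
        · rw [fNall_lt h]; rfl
        · rw [fNall_ge h]; exact Or.inl rfl
      · refine ⟨⟨by linarith [hx.1], hx.2⟩, ?_⟩
        rw [fNall_ge (not_lt.2 hx.1)]
        exact Or.inr rfl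
  rw [hEq]
  refine IsConnected.union ⟨(3/5, 1/5), ?_, ?_⟩ hA hB
  · exact ⟨3/5, ⟨by norm_num, by norm_num⟩, by norm_num [Prod.ext_iff]⟩
  · exact ⟨3/5, ⟨by norm_num, by norm_num⟩, by norm_num [Prod.ext_iff]⟩

theorem stmt8 :
    USC fNall ∧
    (∀ y ∈ Icc (0:ℝ) 1, ∃ x ∈ Icc (0:ℝ) 1, y ∈ fNall x) ∧
    IsConnected (SVFGraph fNall) ∧
    ¬ WIVP fNall := by
  refine ⟨usc_aux, ?_, conn_aux, ?_⟩
  · intro y hy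
    refine ⟨(y+1)/2, ⟨by linarith [hy.1], by linarith [hy.2]⟩, ?_⟩
    rw [fNall_ge (by push_neg; linarith [hy.1])]
    right
    simp only [mem_singleton_iff]
    ring
  · intro h
    obtain ⟨y₂, hy₂, hall⟩ := h (1/2) (by norm_num) (2/5) (by norm_num) (by norm_num) 0
      (by rw [fNall_ge (by norm_num)]; right; norm_num)
    rw [fNall_lt (by norm_num), mem_singleton_iff] at hy₂
    have hy2 : y₂ = 2/15 := by rw [hy₂]; norm_num
    subst hy2
    obtain ⟨x, hx, hyx⟩ := hall (1/15) (by rw [Set.mem_uIcc]; norm_num)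
    rw [Set.mem_uIcc] at hx
    have hx1 : 2/5 ≤ x := by rcases hx with h | h <;> linarith [h.1, h.2]
    have hx2 : x ≤ 1/2 := by rcases hx with h | h <;> linarith [h.1, h.2]
    by_cases hxh : x < 1/2
    · rw [fNall_lt hxh, mem_singleton_iff] at hyx
      linarith
    · rw [fNall_ge hxh] at hyx
      rcases hyx with h | h
      · linarith
      · rw [mem_singleton_iff] at h; linarith
end

section
/- Let X be a compact metric space and {E_i}_{i∈ℕ} a sequence of connected subsets of X. If the lower limit lim inf E_i (the set of x ∈ X such that every open set containing x meets E_i for all but finitely many i) is nonempty, then the upper limit lim sup E_i (the set of x ∈ X such that every open set containing x meets E_i for infinitely many i) is connected. -/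
open Set

/-- Topological upper limit of a sequence of sets. -/
def setLimsup {X : Type*} [TopologicalSpace X] (E : ℕ → Set X) : Set X :=
  {x | ∀ U : Set X, IsOpen U → x ∈ U → {i | (U ∩ E i).Nonempty}.Infinite}

/-- Topological lower limit of a sequence of sets. -/
def setLiminf {X : Type*} [TopologicalSpace X] (E : ℕ → Set X) : Set X :=
  {x | ∀ U : Set X, IsOpen U → x ∈ U → {i | ¬ (U ∩ E i).Nonempty}.Finite}

lemma liminf_subset_limsup {X : Type*} [TopologicalSpace X] (E : ℕ → Set X) :
    setLiminf E ⊆ setLimsup E := by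
  intro x hx U hU hxU
  have h1 := hx U hU hxU
  have : {i | (U ∩ E i).Nonempty} = {i | ¬ (U ∩ E i).Nonempty}ᶜ := by
    ext i; simp
  rw [this]
  exact h1.infinite_compl

lemma limsup_closed {X : Type*} [TopologicalSpace X] (E : ℕ → Set X) :
    IsClosed (setLimsup E) := by
  rw [← isOpen_compl_iff, isOpen_iff_forall_mem_open]
  intro x hx
  simp only [setLimsup, mem_compl_iff, mem_setOf_eq, not_forall] at hx
  obtain ⟨U, hU, hxU, hfin⟩ := hx
  refine ⟨U, fun y hy hmem => ?_, hU, hxU⟩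
  exact hfin (hmem U hU hy)

lemma key_lemma {X : Type*} [MetricSpace X] [CompactSpace X]
    (E : ℕ → Set X) (hE : ∀ i, IsPreconnected (E i))
    (U V : Set X) (hU : IsOpen U) (hV : IsOpen V) (hd : Disjoint U V)
    (hsub : setLimsup E ⊆ U ∪ V) (x₀ : X) (hx₀ : x₀ ∈ setLiminf E) (hx₀U : x₀ ∈ U)
    (b : X) (hb : b ∈ setLimsup E) (hbV : b ∈ V) : False := by
  have hS : ({i | (V ∩ E i).Nonempty}).Infinite := hb V hV hbV
  have hT : ({i | ¬ (U ∩ E i).Nonempty}).Finite := hx₀ U hU hx₀U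
  set I : Set ℕ := {i | (V ∩ E i).Nonempty} \ {i | ¬ (U ∩ E i).Nonempty} with hI_def
  have hI : I.Infinite := hS.diff hT
  have hch : ∀ i ∈ I, ∃ x, x ∈ E i ∧ x ∉ U ∪ V := by
    intro i hi
    have hEV : (E i ∩ V).Nonempty := by
      obtain ⟨y, hy⟩ := hi.1; exact ⟨y, hy.2, hy.1⟩
    have hEU : (E i ∩ U).Nonempty := by
      have := hi.2
      simp only [mem_setOf_eq, not_not] at this
      obtain ⟨y, hy⟩ := this; exact ⟨y, hy.2, hy.1⟩
    by_contra hcon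
    push_neg at hcon
    have hsub' : E i ⊆ U ∪ V := fun x hx => hcon x hx
    obtain ⟨z, hz⟩ := hE i U V hU hV hsub' hEU hEV
    exact (hd.ne_of_mem hz.2.1 hz.2.2) rfl
  haveI : Nonempty X := ⟨x₀⟩
  choose! f hf1 hf2 using hch
  set K : Set X := (U ∪ V)ᶜ with hK_def
  have hKclosed : IsClosed K := (hU.union hV).isClosed_compl
  have hKcomp : IsCompact K := hKclosed.isCompact
  set F : Filter ℕ := Filter.atTop ⊓ Filter.principal I with hF_def
  haveI hFne : F.NeBot := by
    rw [hF_def, Filter.inf_principal_neBot_iff]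
    intro W hW
    obtain ⟨n, hn⟩ := Filter.mem_atTop_sets.mp hW
    obtain ⟨m, hmI, hmn⟩ := hI.exists_gt n
    exact ⟨m, hn m hmn.le, hmI⟩
  have hle : Filter.map f F ≤ Filter.principal K := by
    rw [Filter.le_principal_iff, Filter.mem_map]
    apply Filter.mem_of_superset (Filter.mem_inf_of_right (Filter.mem_principal_self I))
    intro i hi
    exact hf2 i hi
  obtain ⟨x, hxK, hcl⟩ := hKcomp hle
  have hxlim : x ∈ setLimsup E := by
    intro W hW hxW
    have hfreq : ∃ᶠ i in F, f i ∈ W := by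
      have := (mapClusterPt_iff_frequently.mp hcl) W (hW.mem_nhds hxW)
      exact this
    rw [hF_def] at hfreq
    have hfreq2 : ∃ᶠ i in Filter.atTop, i ∈ I ∧ f i ∈ W :=
      Filter.frequently_inf_principal.mp (by simpa [and_comm] using hfreq)
    have hinf : {i | i ∈ I ∧ f i ∈ W}.Infinite :=
      Nat.frequently_atTop_iff_infinite.mp hfreq2
    apply hinf.mono
    intro i ⟨hiI, hiW⟩
    exact ⟨f i, hiW, hf1 i hiI⟩
  exact hxK (hsub hxlim)

theorem stmt13 {X : Type*} [MetricSpace X] [CompactSpace X]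
    (E : ℕ → Set X) (hE : ∀ i, IsConnected (E i))
    (h : (setLiminf E).Nonempty) :
    IsConnected (setLimsup E) := by
  obtain ⟨x₀, hx₀⟩ := h
  have hx₀L : x₀ ∈ setLimsup E := liminf_subset_limsup E hx₀
  constructor
  · exact ⟨x₀, hx₀L⟩
  intro U V hU hV hsub ⟨a, haL, haU⟩ ⟨c, hcL, hcV⟩
  by_contra hcon
  rw [Set.not_nonempty_iff_eq_empty] at hcon
  set L := setLimsup E with hL_def
  have hLclosed : IsClosed L := limsup_closed E
  have hA : IsClosed (L ∩ U) := by
    have : L ∩ U = L \ V := by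
      apply Subset.antisymm
      · rintro y ⟨hyL, hyU⟩
        refine ⟨hyL, fun hyV => ?_⟩
        have : y ∈ L ∩ (U ∩ V) := ⟨hyL, hyU, hyV⟩
        rw [hcon] at this; exact this
      · rintro y ⟨hyL, hyV⟩
        rcases hsub hyL with hyU | h'
        · exact ⟨hyL, hyU⟩
        · exact absurd h' hyV
    rw [this]
    exact hLclosed.sdiff hV
  have hB : IsClosed (L ∩ V) := by
    have : L ∩ V = L \ U := by
      apply Subset.antisymm
      · rintro y ⟨hyL, hyV⟩
        refine ⟨hyL, fun hyU => ?_⟩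
        have : y ∈ L ∩ (U ∩ V) := ⟨hyL, hyU, hyV⟩
        rw [hcon] at this; exact this
      · rintro y ⟨hyL, hyU⟩
        rcases hsub hyL with h' | hyV
        · exact absurd h' hyU
        · exact ⟨hyL, hyV⟩
    rw [this]
    exact hLclosed.sdiff hU
  have hdisj : Disjoint (L ∩ U) (L ∩ V) := by
    rw [Set.disjoint_iff_inter_eq_empty]
    rw [← hcon]; ext y; constructor
    · rintro ⟨⟨h1, h2⟩, ⟨h3, h4⟩⟩; exact ⟨h1, h2, h4⟩
    · rintro ⟨h1, h2, h3⟩; exact ⟨⟨h1, h2⟩, ⟨h1, h3⟩⟩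
  obtain ⟨U', V', hU', hV', hAU', hBV', hd'⟩ :=
    SeparatedNhds.of_isCompact_isCompact hA.isCompact hB.isCompact hdisj
  have hsub' : L ⊆ U' ∪ V' := by
    intro y hyL
    rcases hsub hyL with hyU | hyV
    · exact Or.inl (hAU' ⟨hyL, hyU⟩)
    · exact Or.inr (hBV' ⟨hyL, hyV⟩)
  rcases hsub hx₀L with hx₀U | hx₀V
  · exact key_lemma E (fun i => (hE i).isPreconnected) U' V' hU' hV' hd' hsub' x₀ hx₀
      (hAU' ⟨hx₀L, hx₀U⟩) c hcL (hBV' ⟨hcL, hcV⟩)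
  · exact key_lemma E (fun i => (hE i).isPreconnected) V' U' hV' hU' hd'.symm
      (by rwa [Set.union_comm]) x₀ hx₀ (hBV' ⟨hx₀L, hx₀V⟩) a haL (hAU' ⟨haL, haU⟩)
end

section
/- Let f : [0,1] → 2^[0,1] be upper semicontinuous with connected graph G(f) and having the Weak Intermediate Value Property, and let (x₀, y₀) ∈ G(f). Then there exists an upper semicontinuous set-valued function g : [0,1] → C([0,1]) (i.e., g(x) is a nonempty compact connected subset of [0,1] for every x) such that (x₀, y₀) ∈ G(g) and G(g) ⊆ G(f). -/
open Set

namespace Stmt14Aux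

open Metric Topology Filter

lemma graph_closed {f : ℝ → Set ℝ} (hSV : SV f) (husc : USC f) : IsClosed (SVGraph f) := by
  rw [← isOpen_compl_iff, isOpen_iff_mem_nhds]
  rintro ⟨x, y⟩ hxy
  by_cases hx : x ∈ Icc (0:ℝ) 1
  · have hy : y ∉ f x := fun h => hxy ⟨hx, h⟩
    obtain ⟨hne, hcpt, hsub⟩ := hSV x hx
    set d := infDist y (f x) with hd
    have hdpos : 0 < d := by
      rcases eq_or_lt_of_le (infDist_nonneg (s := f x) (x := y)) with h0 | h
      · exfalso
        apply hy
        have : y ∈ closure (f x) := (mem_closure_iff_infDist_zero hne).2 h0.symm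
        rwa [hcpt.isClosed.closure_eq] at this
      · exact h
    set U : Set ℝ := {z | infDist z (f x) < d/2} with hU
    have hUopen : IsOpen U := isOpen_lt (continuous_infDist_pt (f x)) continuous_const
    have hfU : f x ⊆ U := fun z hz => by
      simp only [hU, mem_setOf_eq, infDist_zero_of_mem hz]
      linarith
    obtain ⟨V, hVopen, hxV, hV⟩ := husc x hx U hUopen hfU
    have : V ×ˢ ball y (d/2) ∈ 𝓝 (x, y) :=
      (hVopen.prod isOpen_ball).mem_nhds ⟨hxV, mem_ball_self (by linarith)⟩
    refine mem_of_superset this ?_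
    rintro ⟨v, z⟩ ⟨hv, hz⟩ hmem
    have hzU : z ∈ U := hV v ⟨hv, hmem.1⟩ hmem.2
    obtain ⟨w, hw, hzw⟩ := (infDist_lt_iff hne).1 hzU
    have h1 : d ≤ dist y w := infDist_le_dist_of_mem hw
    have h2 : dist y w ≤ dist y z + dist z w := dist_triangle _ _ _
    have h3 : dist z y < d/2 := mem_ball.1 hz
    rw [dist_comm] at h3
    linarith
  · have hop : IsOpen ((Icc (0:ℝ) 1)ᶜ ×ˢ (univ : Set ℝ)) :=
      isClosed_Icc.isOpen_compl.prod isOpen_univ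
    refine mem_of_superset (hop.mem_nhds ⟨hx, trivial⟩) ?_
    rintro ⟨v, z⟩ ⟨hv, -⟩ hmem
    exact hv hmem.1

lemma exists_chain {f : ℝ → Set ℝ} (hw : WIVP f) (s : ℕ → ℝ)
    (hsmem : ∀ k, s k ∈ Icc (0:ℝ) 1) (y₀ : ℝ) (hy : y₀ ∈ f (s 0)) :
    ∃ c : ℕ → ℝ, c 0 = y₀ ∧ (∀ k, c k ∈ f (s k)) ∧
      ∀ k, ∀ y ∈ uIcc (c k) (c (k+1)), ∃ x ∈ uIcc (s k) (s (k+1)), y ∈ f x := by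
  have step : ∀ k (y : ℝ), y ∈ f (s k) → ∃ y', y' ∈ f (s (k+1)) ∧
      ∀ z ∈ uIcc y y', ∃ x ∈ uIcc (s k) (s (k+1)), z ∈ f x := by
    intro k y hyk
    by_cases h : s k = s (k+1)
    · refine ⟨y, h ▸ hyk, fun z hz => ⟨s k, left_mem_uIcc, ?_⟩⟩
      rw [uIcc_self, mem_singleton_iff] at hz
      rwa [hz]
    · obtain ⟨y', hy', hcov⟩ := hw (s k) (hsmem k) (s (k+1)) (hsmem (k+1)) h y hyk
      exact ⟨y', hy', hcov⟩
  choose F hF1 hF2 using step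
  let c : ∀ k, {y : ℝ // y ∈ f (s k)} := fun k =>
    Nat.rec (motive := fun k => {y : ℝ // y ∈ f (s k)}) ⟨y₀, hy⟩
      (fun k ih => ⟨F k ih.1 ih.2, hF1 k ih.1 ih.2⟩) k
  exact ⟨fun k => (c k).1, rfl, fun k => (c k).2, fun k => hF2 k (c k).1 (c k).2⟩

lemma chainIVP (s c : ℕ → ℝ) (hs : ∀ k, s k ≤ s (k+1)) (Γ : Set (ℝ×ℝ))
    (hbox : ∀ k, (Icc (s k) (s (k+1)) ×ˢ uIcc (c k) (c (k+1))) ⊆ Γ) :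
    ∀ d k u v u' v', u ∈ Icc (s k) (s (k+1)) → v ∈ uIcc (c k) (c (k+1)) →
      u' ∈ Icc (s (k+d)) (s (k+d+1)) → v' ∈ uIcc (c (k+d)) (c (k+d+1)) →
      ∀ z ∈ uIcc v v', ∃ w, w ∈ Icc (min u u') (max u u') ∧ (w, z) ∈ Γ := by
  have hmono : Monotone s := monotone_nat_of_le_succ hs
  intro d
  induction d with
  | zero =>
    intro k u v u' v' hu hv hu' hv' z hz
    exact ⟨u, ⟨min_le_left _ _, le_max_left _ _⟩,
      hbox k ⟨hu, uIcc_subset_uIcc hv hv' hz⟩⟩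
  | succ d ih =>
    intro k u v u' v' hu hv hu' hv' z hz
    have hut : u ≤ s (k+1) := hu.2
    have htu' : s (k+1) ≤ u' := le_trans (hmono (by omega : k+1 ≤ k+(d+1))) hu'.1
    rcases uIcc_subset_uIcc_union_uIcc (b := c (k+1)) hz with hz1 | hz2
    · exact ⟨u, ⟨min_le_left _ _, le_max_left _ _⟩,
        hbox k ⟨hu, uIcc_subset_uIcc hv right_mem_uIcc hz1⟩⟩
    · have hu'' : u' ∈ Icc (s ((k+1)+d)) (s ((k+1)+d+1)) := by
        rwa [show (k+1)+d = k+(d+1) by omega]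
      have hv'' : v' ∈ uIcc (c ((k+1)+d)) (c ((k+1)+d+1)) := by
        rwa [show (k+1)+d = k+(d+1) by omega]
      obtain ⟨w, hw, hwΓ⟩ := ih (k+1) (s (k+1)) (c (k+1)) u' v'
        ⟨le_refl _, hs _⟩ left_mem_uIcc hu'' hv'' z hz2
      refine ⟨w, ⟨?_, ?_⟩, hwΓ⟩
      · exact le_trans (min_le_min hut (le_refl _)) hw.1
      · exact le_trans hw.2 (max_le (le_trans htu' (le_max_right u u')) (le_max_right _ _))

lemma chainIVP' (s c : ℕ → ℝ) (hs : ∀ k, s (k+1) ≤ s k) (Γ : Set (ℝ×ℝ))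
    (hbox : ∀ k, (Icc (s (k+1)) (s k) ×ˢ uIcc (c k) (c (k+1))) ⊆ Γ) :
    ∀ d k u v u' v', u ∈ Icc (s (k+1)) (s k) → v ∈ uIcc (c k) (c (k+1)) →
      u' ∈ Icc (s (k+d+1)) (s (k+d)) → v' ∈ uIcc (c (k+d)) (c (k+d+1)) →
      ∀ z ∈ uIcc v v', ∃ w, w ∈ Icc (min u u') (max u u') ∧ (w, z) ∈ Γ := by
  have hmono : Antitone s := antitone_nat_of_succ_le hs
  intro d
  induction d with
  | zero =>
    intro k u v u' v' hu hv hu' hv' z hz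
    exact ⟨u, ⟨min_le_left _ _, le_max_left _ _⟩,
      hbox k ⟨hu, uIcc_subset_uIcc hv hv' hz⟩⟩
  | succ d ih =>
    intro k u v u' v' hu hv hu' hv' z hz
    have hut : s (k+1) ≤ u := hu.1
    have htu' : u' ≤ s (k+1) := le_trans hu'.2 (hmono (by omega : k+1 ≤ k+(d+1)))
    rcases uIcc_subset_uIcc_union_uIcc (b := c (k+1)) hz with hz1 | hz2
    · exact ⟨u, ⟨min_le_left _ _, le_max_left _ _⟩,
        hbox k ⟨hu, uIcc_subset_uIcc hv right_mem_uIcc hz1⟩⟩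
    · have hu'' : u' ∈ Icc (s ((k+1)+d+1)) (s ((k+1)+d)) := by
        rwa [show (k+1)+d = k+(d+1) by omega]
      have hv'' : v' ∈ uIcc (c ((k+1)+d)) (c ((k+1)+d+1)) := by
        rwa [show (k+1)+d = k+(d+1) by omega]
      obtain ⟨w, hw, hwΓ⟩ := ih (k+1) (s (k+1)) (c (k+1)) u' v'
        ⟨hs _, le_refl _⟩ left_mem_uIcc hu'' hv'' z hz2
      refine ⟨w, ⟨?_, ?_⟩, hwΓ⟩
      · have h1 : min u u' ≤ min (s (k+1)) u' := by
          rw [min_eq_right (le_trans htu' hut), min_eq_right htu']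
        exact le_trans h1 hw.1
      · have h2 : max (s (k+1)) u' ≤ max u u' := by
          rw [max_eq_left htu']
          exact le_trans hut (le_max_left _ _)
        exact le_trans hw.2 h2
noncomputable def sR (x₀ : ℝ) (n : ℕ) (k : ℕ) : ℝ := min 1 (x₀ + k / (n+1))
noncomputable def sL (x₀ : ℝ) (n : ℕ) (k : ℕ) : ℝ := max 0 (x₀ - k / (n+1))

variable {x₀ : ℝ} {n k : ℕ}

lemma sR_mem (hx : x₀ ∈ Icc (0:ℝ) 1) : sR x₀ n k ∈ Icc (0:ℝ) 1 :=
  ⟨le_min zero_le_one (add_nonneg hx.1 (by positivity)), min_le_left _ _⟩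

lemma sL_mem (hx : x₀ ∈ Icc (0:ℝ) 1) : sL x₀ n k ∈ Icc (0:ℝ) 1 := by
  refine ⟨le_max_left _ _, max_le zero_le_one ?_⟩
  have : (0:ℝ) ≤ k / (n+1) := by positivity
  linarith [hx.2]

lemma sR_zero (hx2 : x₀ ≤ 1) : sR x₀ n 0 = x₀ := by
  simp [sR, min_eq_right hx2]

lemma sL_zero (hx1 : 0 ≤ x₀) : sL x₀ n 0 = x₀ := by
  simp [sL, max_eq_right hx1]

lemma kdiv_step : ((k+1:ℕ):ℝ) / (n+1) = (k:ℝ)/(n+1) + 1/(n+1) := by push_cast; ring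

lemma sR_mono : sR x₀ n k ≤ sR x₀ n (k+1) := by
  have h0 : (0:ℝ) ≤ 1/(n+1) := by positivity
  have : (k:ℝ) / (n+1) ≤ ((k+1:ℕ):ℝ) / (n+1) := by rw [kdiv_step]; linarith
  exact min_le_min le_rfl (by linarith)

lemma sL_mono : sL x₀ n (k+1) ≤ sL x₀ n k := by
  have h0 : (0:ℝ) ≤ 1/(n+1) := by positivity
  have : (k:ℝ) / (n+1) ≤ ((k+1:ℕ):ℝ) / (n+1) := by rw [kdiv_step]; linarith
  exact max_le_max le_rfl (by linarith)

lemma sR_step : sR x₀ n (k+1) - sR x₀ n k ≤ 1/(n+1) := by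
  unfold sR
  rw [kdiv_step]
  have h0 : (0:ℝ) ≤ 1/(n+1) := by positivity
  rcases le_total (1:ℝ) (x₀ + (k:ℝ)/(n+1)) with h | h
  · rcases le_total (1:ℝ) (x₀ + ((k:ℝ)/(n+1) + 1/(n+1))) with h' | h'
    · rw [min_eq_left h, min_eq_left h']; linarith
    · rw [min_eq_left h, min_eq_right h']; linarith
  · rcases le_total (1:ℝ) (x₀ + ((k:ℝ)/(n+1) + 1/(n+1))) with h' | h'
    · rw [min_eq_right h, min_eq_left h']; linarith
    · rw [min_eq_right h, min_eq_right h']; linarith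

lemma sL_step : sL x₀ n k - sL x₀ n (k+1) ≤ 1/(n+1) := by
  unfold sL
  rw [kdiv_step]
  have h0 : (0:ℝ) ≤ 1/(n+1) := by positivity
  rcases le_total (x₀ - (k:ℝ)/(n+1)) 0 with h | h
  · rcases le_total (x₀ - ((k:ℝ)/(n+1) + 1/(n+1))) 0 with h' | h'
    · rw [max_eq_left h, max_eq_left h']; linarith
    · rw [max_eq_left h, max_eq_right h']; linarith
  · rcases le_total (x₀ - ((k:ℝ)/(n+1) + 1/(n+1))) 0 with h' | h'
    · rw [max_eq_right h, max_eq_left h']; linarith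
    · rw [max_eq_right h, max_eq_right h']; linarith

lemma sR_ge (hx : x₀ ∈ Icc (0:ℝ) 1) : x₀ ≤ sR x₀ n k := by
  have hm : Monotone (sR x₀ n) := monotone_nat_of_le_succ (fun _ => sR_mono)
  have := hm (Nat.zero_le k)
  rwa [sR_zero hx.2] at this

lemma sL_le (hx : x₀ ∈ Icc (0:ℝ) 1) : sL x₀ n k ≤ x₀ := by
  have hm : Antitone (sL x₀ n) := antitone_nat_of_succ_le (fun _ => sL_mono)
  have := hm (Nat.zero_le k)
  rwa [sL_zero hx.1] at this

lemma sR_cover (hx : x₀ ∈ Icc (0:ℝ) 1) {x : ℝ} (hx' : x ∈ Icc (0:ℝ) 1) (hxx : x₀ ≤ x) :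
    ∃ k, x ∈ Icc (sR x₀ n k) (sR x₀ n (k+1)) := by
  set k := ⌊(x - x₀) * (n+1)⌋₊ with hk
  have hnpos : (0:ℝ) < (n:ℝ) + 1 := by positivity
  have h1 : (k:ℝ) ≤ (x - x₀) * (n+1) :=
    Nat.floor_le (mul_nonneg (by linarith) (by positivity))
  have h2 : (x - x₀) * (n+1) < (k:ℝ) + 1 := Nat.lt_floor_add_one _
  refine ⟨k, ⟨?_, ?_⟩⟩
  · refine le_trans (min_le_right _ _) ?_
    have : (k:ℝ)/(n+1) ≤ x - x₀ := by rw [div_le_iff₀ hnpos]; linarith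
    linarith
  · refine le_min hx'.2 ?_
    have : x - x₀ ≤ ((k+1:ℕ):ℝ)/(n+1) := by
      rw [le_div_iff₀ hnpos]; push_cast; linarith
    linarith

lemma sL_cover (hx : x₀ ∈ Icc (0:ℝ) 1) {x : ℝ} (hx' : x ∈ Icc (0:ℝ) 1) (hxx : x ≤ x₀) :
    ∃ k, x ∈ Icc (sL x₀ n (k+1)) (sL x₀ n k) := by
  set k := ⌊(x₀ - x) * (n+1)⌋₊ with hk
  have hnpos : (0:ℝ) < (n:ℝ) + 1 := by positivity
  have h1 : (k:ℝ) ≤ (x₀ - x) * (n+1) :=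
    Nat.floor_le (mul_nonneg (by linarith) (by positivity))
  have h2 : (x₀ - x) * (n+1) < (k:ℝ) + 1 := Nat.lt_floor_add_one _
  refine ⟨k, ⟨?_, ?_⟩⟩
  · refine max_le hx'.1 ?_
    have : x₀ - x ≤ ((k+1:ℕ):ℝ)/(n+1) := by
      rw [le_div_iff₀ hnpos]; push_cast; linarith
    linarith
  · refine le_trans ?_ (le_max_right _ _)
    have : (k:ℝ)/(n+1) ≤ x₀ - x := by rw [div_le_iff₀ hnpos]; linarith
    linarith

noncomputable def UF : Ultrafilter ℕ := Ultrafilter.of atTop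

lemma UF_le : (UF : Filter ℕ) ≤ atTop := Ultrafilter.of_le _

lemma UF_small {ε : ℝ} (hε : 0 < ε) : {n : ℕ | 1/((n:ℝ)+1) < ε} ∈ UF := by
  apply UF_le
  exact tendsto_one_div_add_atTop_nhds_zero_nat.eventually (gt_mem_nhds hε)

def ULim (A : ℕ → Set (ℝ×ℝ)) : Set (ℝ×ℝ) :=
  {p | ∀ ε > 0, {n | ∃ q ∈ A n, dist p q < ε} ∈ UF}

lemma ulim_mem_of_all {A : ℕ → Set (ℝ×ℝ)} {p : ℝ×ℝ} (h : ∀ n, p ∈ A n) : p ∈ ULim A := by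
  intro ε hε
  exact mem_of_superset univ_mem (fun n _ => ⟨p, h n, by simpa using hε⟩)

lemma ulim_closed (A : ℕ → Set (ℝ×ℝ)) : IsClosed (ULim A) := by
  refine isClosed_of_closure_subset ?_
  intro p hp ε hε
  obtain ⟨p', hp', hpp'⟩ := Metric.mem_closure_iff.1 hp (ε/2) (by linarith)
  refine mem_of_superset (hp' (ε/2) (by linarith)) ?_
  rintro n ⟨q, hq, hd⟩
  exact ⟨q, hq, by
    calc dist p q ≤ dist p p' + dist p' q := dist_triangle _ _ _
    _ < ε := by linarith⟩

lemma ulim_subset_closed {A : ℕ → Set (ℝ×ℝ)} {C : Set (ℝ×ℝ)} (hC : IsClosed C)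
    (hnear : ∀ n, ∀ q ∈ A n, ∃ r ∈ C, dist q r ≤ 1/((n:ℝ)+1)) : ULim A ⊆ C := by
  intro p hp
  rw [← hC.closure_eq]
  rw [Metric.mem_closure_iff]
  intro ε hε
  have hmem := Filter.inter_mem (hp (ε/2) (by linarith)) (UF_small (by linarith : (0:ℝ) < ε/2))
  obtain ⟨n, ⟨⟨q, hq, hd⟩, hn2⟩⟩ := Filter.nonempty_of_mem hmem
  obtain ⟨r, hr, hqr⟩ := hnear n q hq
  refine ⟨r, hr, ?_⟩
  calc dist p r ≤ dist p q + dist q r := dist_triangle _ _ _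
  _ < ε := by
    have : (1:ℝ)/((n:ℝ)+1) < ε/2 := hn2
    linarith

lemma ulim_approx {A : ℕ → Set (ℝ×ℝ)} (hNE : ∀ n, (A n).Nonempty) {p : ℝ×ℝ} (hp : p ∈ ULim A) :
    ∃ qq : ℕ → ℝ×ℝ, (∀ n, qq n ∈ A n) ∧ ∀ ε > 0, {n | dist p (qq n) < ε} ∈ UF := by
  have hex : ∀ n : ℕ, ∃ q ∈ A n, dist p q < infDist p (A n) + 1/((n:ℝ)+1) := by
    intro n
    apply (infDist_lt_iff (hNE n)).1
    have : (0:ℝ) < 1/((n:ℝ)+1) := by positivity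
    linarith
  choose qq hqq1 hqq2 using hex
  refine ⟨qq, hqq1, ?_⟩
  intro ε hε
  refine mem_of_superset
    (Filter.inter_mem (hp (ε/2) (by linarith)) (UF_small (by linarith : (0:ℝ) < ε/2))) ?_
  rintro n ⟨⟨q, hq, hd⟩, hn2⟩
  have h3 : infDist p (A n) ≤ dist p q := infDist_le_dist_of_mem hq
  have h4 := hqq2 n
  have h5 : (1:ℝ)/((n:ℝ)+1) < ε/2 := hn2
  simp only [mem_setOf_eq]
  linarith

lemma ulim_sec {A : ℕ → Set (ℝ×ℝ)} {x : ℝ} (hsec : ∀ n, ∃ y ∈ Icc (0:ℝ) 1, (x, y) ∈ A n) :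
    ∃ y, (x, y) ∈ ULim A := by
  choose y hy1 hy2 using hsec
  obtain ⟨z, hz, hmap⟩ := isCompact_Icc.ultrafilter_le_nhds (UF.map y) (by
    rw [Ultrafilter.coe_map, le_principal_iff, mem_map]
    exact mem_of_superset univ_mem (fun n _ => hy1 n))
  refine ⟨z, ?_⟩
  intro ε hε
  have ht : Tendsto y UF (𝓝 z) := hmap
  have hev : ∀ᶠ n in (UF : Filter ℕ), dist (y n) z < ε := Metric.tendsto_nhds.1 ht ε hε
  refine mem_of_superset hev ?_
  intro n hn
  refine ⟨(x, y n), hy2 n, ?_⟩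
  rw [Prod.dist_eq]
  simp only [dist_self]
  rw [dist_comm]
  exact max_lt hε hn

lemma ulim_interval {A : ℕ → Set (ℝ×ℝ)} (hNE : ∀ n, (A n).Nonempty)
    (hIVP : ∀ n, ∀ p ∈ A n, ∀ q ∈ A n, ∀ z ∈ uIcc p.2 q.2,
      ∃ w, w ∈ Icc (min p.1 q.1) (max p.1 q.1) ∧ (w, z) ∈ A n)
    {x y y' z : ℝ} (hy : (x, y) ∈ ULim A) (hy' : (x, y') ∈ ULim A) (hz : z ∈ Icc y y') :
    (x, z) ∈ ULim A := by
  rcases eq_or_lt_of_le hz.1 with h1 | h1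
  · rwa [← h1]
  rcases eq_or_lt_of_le hz.2 with h2 | h2
  · rwa [h2]
  obtain ⟨qq, hqq1, hqq2⟩ := ulim_approx hNE hy
  obtain ⟨qq', hqq1', hqq2'⟩ := ulim_approx hNE hy'
  intro ε hε
  set η := min (min (z - y) (y' - z)) ε with hη
  have hηpos : 0 < η := lt_min (lt_min (by linarith) (by linarith)) hε
  refine mem_of_superset (Filter.inter_mem (hqq2 η hηpos) (hqq2' η hηpos)) ?_
  rintro n ⟨hd, hd'⟩
  simp only [mem_setOf_eq] at hd hd'
  have dfst : ∀ p q : ℝ×ℝ, dist p.1 q.1 ≤ dist p q := fun p q => by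
    rw [Prod.dist_eq]; exact le_max_left _ _
  have dsnd : ∀ p q : ℝ×ℝ, dist p.2 q.2 ≤ dist p q := fun p q => by
    rw [Prod.dist_eq]; exact le_max_right _ _
  have hb1 : |y - (qq n).2| < η := by
    rw [← Real.dist_eq]
    exact lt_of_le_of_lt (dsnd (x, y) (qq n)) hd
  have hb1' : |y' - (qq' n).2| < η := by
    rw [← Real.dist_eq]
    exact lt_of_le_of_lt (dsnd (x, y') (qq' n)) hd'
  have hb2 : |x - (qq n).1| < η := by
    rw [← Real.dist_eq]
    exact lt_of_le_of_lt (dfst (x, y) (qq n)) hd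
  have hb2' : |x - (qq' n).1| < η := by
    rw [← Real.dist_eq]
    exact lt_of_le_of_lt (dfst (x, y') (qq' n)) hd'
  rw [abs_lt] at hb1 hb1' hb2 hb2'
  have hηz : η ≤ z - y := (min_le_left _ _).trans (min_le_left _ _)
  have hηz' : η ≤ y' - z := (min_le_left _ _).trans (min_le_right _ _)
  have hηε : η ≤ ε := min_le_right _ _
  have hzu : z ∈ uIcc (qq n).2 (qq' n).2 := by
    rw [Set.mem_uIcc]
    left
    constructor <;> linarith [hb1.1, hb1.2, hb1'.1, hb1'.2]
  obtain ⟨w, hw, hwA⟩ := hIVP n (qq n) (hqq1 n) (qq' n) (hqq1' n) z hzu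
  refine ⟨(w, z), hwA, ?_⟩
  have : dist ((x, z) : ℝ×ℝ) ((w, z) : ℝ×ℝ) = dist x w := dist_prod_same_right
  rw [this, Real.dist_eq, abs_lt]
  have hw1 : min (qq n).1 (qq' n).1 ≤ w := hw.1
  have hw2 : w ≤ max (qq n).1 (qq' n).1 := hw.2
  have hmin : x - η < min (qq n).1 (qq' n).1 := by
    rw [lt_min_iff]; constructor <;> linarith [hb2.1, hb2.2, hb2'.1, hb2'.2]
  have hmax : max (qq n).1 (qq' n).1 < x + η := by
    rw [max_lt_iff]; constructor <;> linarith [hb2.1, hb2.2, hb2'.1, hb2'.2]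
  constructor <;> linarith

def GN (x₀ : ℝ) (cR cL : ℕ → ℝ) (n : ℕ) : Set (ℝ×ℝ) :=
  (⋃ k, Icc (sR x₀ n k) (sR x₀ n (k+1)) ×ˢ uIcc (cR k) (cR (k+1))) ∪
  (⋃ k, Icc (sL x₀ n (k+1)) (sL x₀ n k) ×ˢ uIcc (cL k) (cL (k+1)))

section GNlem

variable {f : ℝ → Set ℝ} {y₀ : ℝ} {cR cL : ℕ → ℝ}

lemma GN_base (hx : x₀ ∈ Icc (0:ℝ) 1) (h0 : cR 0 = y₀) :
    (x₀, y₀) ∈ GN x₀ cR cL n := by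
  have e : sR x₀ n 0 = x₀ := sR_zero hx.2
  have h2 : x₀ ≤ sR x₀ n (0+1) := by
    have h2 := sR_mono (x₀ := x₀) (n := n) (k := 0)
    rwa [e] at h2
  exact Or.inl (mem_iUnion.2 ⟨0, Set.mem_prod.2 ⟨⟨e.le, h2⟩, h0 ▸ left_mem_uIcc⟩⟩)

lemma GN_sec (hSV : SV f) (hx : x₀ ∈ Icc (0:ℝ) 1)
    (hcRf : ∀ k, cR k ∈ f (sR x₀ n k)) (hcLf : ∀ k, cL k ∈ f (sL x₀ n k))
    {x : ℝ} (hx' : x ∈ Icc (0:ℝ) 1) :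
    ∃ y ∈ Icc (0:ℝ) 1, (x, y) ∈ GN x₀ cR cL n := by
  rcases le_total x₀ x with hxx | hxx
  · obtain ⟨k, hk⟩ := sR_cover (n := n) hx hx' hxx
    exact ⟨cR k, (hSV _ (sR_mem hx)).2.2 (hcRf k),
      Or.inl (mem_iUnion.2 ⟨k, Set.mem_prod.2 ⟨hk, left_mem_uIcc⟩⟩)⟩
  · obtain ⟨k, hk⟩ := sL_cover (n := n) hx hx' hxx
    exact ⟨cL k, (hSV _ (sL_mem hx)).2.2 (hcLf k),
      Or.inr (mem_iUnion.2 ⟨k, Set.mem_prod.2 ⟨hk, left_mem_uIcc⟩⟩)⟩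

lemma GN_near (hx : x₀ ∈ Icc (0:ℝ) 1)
    (hcRcov : ∀ k, ∀ y ∈ uIcc (cR k) (cR (k+1)), ∃ x ∈ uIcc (sR x₀ n k) (sR x₀ n (k+1)), y ∈ f x)
    (hcLcov : ∀ k, ∀ y ∈ uIcc (cL k) (cL (k+1)), ∃ x ∈ uIcc (sL x₀ n k) (sL x₀ n (k+1)), y ∈ f x) :
    ∀ q ∈ GN x₀ cR cL n, ∃ r ∈ SVGraph f, dist q r ≤ 1/((n:ℝ)+1) := by
  rintro q (hq | hq) <;> rw [mem_iUnion] at hq <;> obtain ⟨k, hk⟩ := hq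
  · obtain ⟨x', hx', hfx'⟩ := hcRcov k q.2 hk.2
    rw [uIcc_of_le sR_mono] at hx'
    refine ⟨(x', q.2), ⟨⟨le_trans (sR_mem hx).1 hx'.1, le_trans hx'.2 (sR_mem hx).2⟩, hfx'⟩, ?_⟩
    have he : dist q (x', q.2) = dist q.1 x' := by
      rw [Prod.dist_eq]
      simp only [dist_self]
      exact max_eq_left dist_nonneg
    rw [he, Real.dist_eq, abs_sub_le_iff]
    constructor <;> linarith [hk.1.1, hk.1.2, hx'.1, hx'.2, sR_step (x₀ := x₀) (n := n) (k := k)]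
  · obtain ⟨x', hx', hfx'⟩ := hcLcov k q.2 hk.2
    rw [uIcc_of_ge sL_mono] at hx'
    refine ⟨(x', q.2), ⟨⟨le_trans (sL_mem hx).1 hx'.1, le_trans hx'.2 (sL_mem hx).2⟩, hfx'⟩, ?_⟩
    have he : dist q (x', q.2) = dist q.1 x' := by
      rw [Prod.dist_eq]
      simp only [dist_self]
      exact max_eq_left dist_nonneg
    rw [he, Real.dist_eq, abs_sub_le_iff]
    constructor <;> linarith [hk.1.1, hk.1.2, hx'.1, hx'.2, sL_step (x₀ := x₀) (n := n) (k := k)]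

lemma GN_ivp (hx : x₀ ∈ Icc (0:ℝ) 1) (h0R : cR 0 = y₀) (h0L : cL 0 = y₀) :
    ∀ p ∈ GN x₀ cR cL n, ∀ q ∈ GN x₀ cR cL n, ∀ z ∈ uIcc p.2 q.2,
      ∃ w, w ∈ Icc (min p.1 q.1) (max p.1 q.1) ∧ (w, z) ∈ GN x₀ cR cL n := by
  set A := GN x₀ cR cL n with hA
  have hboxR : ∀ k, (Icc (sR x₀ n k) (sR x₀ n (k+1)) ×ˢ uIcc (cR k) (cR (k+1))) ⊆ A :=
    fun k p hp => Or.inl (mem_iUnion.2 ⟨k, hp⟩)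
  have hboxL : ∀ k, (Icc (sL x₀ n (k+1)) (sL x₀ n k) ×ˢ uIcc (cL k) (cL (k+1))) ⊆ A :=
    fun k p hp => Or.inr (mem_iUnion.2 ⟨k, hp⟩)
  have hRkey := chainIVP (sR x₀ n) cR (fun _ => sR_mono) A hboxR
  have hLkey := chainIVP' (sL x₀ n) cL (fun _ => sL_mono) A hboxL
  have e0R : sR x₀ n 0 = x₀ := sR_zero hx.2
  have e0L : sL x₀ n 0 = x₀ := sL_zero hx.1
  have hbR1 : x₀ ∈ Icc (sR x₀ n 0) (sR x₀ n (0+1)) := by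
    refine ⟨e0R.le, ?_⟩
    have := sR_mono (x₀ := x₀) (n := n) (k := 0)
    rwa [e0R] at this
  have hbL1 : x₀ ∈ Icc (sL x₀ n (0+1)) (sL x₀ n 0) := by
    refine ⟨?_, e0L.ge⟩
    have := sL_mono (x₀ := x₀) (n := n) (k := 0)
    rwa [e0L] at this
  have hRR : ∀ (i j : ℕ) (p q : ℝ×ℝ),
      p ∈ Icc (sR x₀ n i) (sR x₀ n (i+1)) ×ˢ uIcc (cR i) (cR (i+1)) →
      q ∈ Icc (sR x₀ n j) (sR x₀ n (j+1)) ×ˢ uIcc (cR j) (cR (j+1)) →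
      ∀ z ∈ uIcc p.2 q.2, ∃ w, w ∈ Icc (min p.1 q.1) (max p.1 q.1) ∧ (w, z) ∈ A := by
    have key : ∀ (i j : ℕ), i ≤ j → ∀ (p q : ℝ×ℝ),
        p ∈ Icc (sR x₀ n i) (sR x₀ n (i+1)) ×ˢ uIcc (cR i) (cR (i+1)) →
        q ∈ Icc (sR x₀ n j) (sR x₀ n (j+1)) ×ˢ uIcc (cR j) (cR (j+1)) →
        ∀ z ∈ uIcc p.2 q.2, ∃ w, w ∈ Icc (min p.1 q.1) (max p.1 q.1) ∧ (w, z) ∈ A := by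
      intro i j hij p q hp hq z hz
      obtain ⟨d, rfl⟩ := Nat.exists_eq_add_of_le hij
      exact hRkey d i p.1 p.2 q.1 q.2 hp.1 hp.2 hq.1 hq.2 z hz
    intro i j p q hp hq z hz
    rcases le_total i j with hij | hij
    · exact key i j hij p q hp hq z hz
    · obtain ⟨w, hw, hwA⟩ := key j i hij q p hq hp z (by rwa [uIcc_comm])
      exact ⟨w, by rwa [min_comm q.1 p.1, max_comm q.1 p.1] at hw, hwA⟩
  have hLL : ∀ (i j : ℕ) (p q : ℝ×ℝ),
      p ∈ Icc (sL x₀ n (i+1)) (sL x₀ n i) ×ˢ uIcc (cL i) (cL (i+1)) →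
      q ∈ Icc (sL x₀ n (j+1)) (sL x₀ n j) ×ˢ uIcc (cL j) (cL (j+1)) →
      ∀ z ∈ uIcc p.2 q.2, ∃ w, w ∈ Icc (min p.1 q.1) (max p.1 q.1) ∧ (w, z) ∈ A := by
    have key : ∀ (i j : ℕ), i ≤ j → ∀ (p q : ℝ×ℝ),
        p ∈ Icc (sL x₀ n (i+1)) (sL x₀ n i) ×ˢ uIcc (cL i) (cL (i+1)) →
        q ∈ Icc (sL x₀ n (j+1)) (sL x₀ n j) ×ˢ uIcc (cL j) (cL (j+1)) →
        ∀ z ∈ uIcc p.2 q.2, ∃ w, w ∈ Icc (min p.1 q.1) (max p.1 q.1) ∧ (w, z) ∈ A := by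
      intro i j hij p q hp hq z hz
      obtain ⟨d, rfl⟩ := Nat.exists_eq_add_of_le hij
      exact hLkey d i p.1 p.2 q.1 q.2 hp.1 hp.2 hq.1 hq.2 z hz
    intro i j p q hp hq z hz
    rcases le_total i j with hij | hij
    · exact key i j hij p q hp hq z hz
    · obtain ⟨w, hw, hwA⟩ := key j i hij q p hq hp z (by rwa [uIcc_comm])
      exact ⟨w, by rwa [min_comm q.1 p.1, max_comm q.1 p.1] at hw, hwA⟩
  have hLR : ∀ (i j : ℕ) (p q : ℝ×ℝ),
      p ∈ Icc (sL x₀ n (i+1)) (sL x₀ n i) ×ˢ uIcc (cL i) (cL (i+1)) →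
      q ∈ Icc (sR x₀ n j) (sR x₀ n (j+1)) ×ˢ uIcc (cR j) (cR (j+1)) →
      ∀ z ∈ uIcc p.2 q.2, ∃ w, w ∈ Icc (min p.1 q.1) (max p.1 q.1) ∧ (w, z) ∈ A := by
    intro i j p q hp hq z hz
    have hux : p.1 ≤ x₀ := le_trans hp.1.2 (sL_le hx)
    have hu'x : x₀ ≤ q.1 := le_trans (sR_ge hx) hq.1.1
    rcases uIcc_subset_uIcc_union_uIcc (b := y₀) hz with hz1 | hz2
    · obtain ⟨w, hw, hwA⟩ := hLkey i 0 x₀ y₀ p.1 p.2 hbL1 (h0L ▸ left_mem_uIcc)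
        (by simpa using hp.1) (by simpa using hp.2) z (by rwa [uIcc_comm])
      have h1 := hw.1
      rw [min_eq_right hux] at h1
      have h2 := hw.2
      rw [max_eq_left hux] at h2
      exact ⟨w, ⟨le_trans (min_le_left _ _) h1,
        le_trans h2 (le_trans hu'x (le_max_right _ _))⟩, hwA⟩
    · obtain ⟨w, hw, hwA⟩ := hRkey j 0 x₀ y₀ q.1 q.2 hbR1 (h0R ▸ left_mem_uIcc)
        (by simpa using hq.1) (by simpa using hq.2) z hz2
      have h1 := hw.1
      rw [min_eq_left hu'x] at h1
      have h2 := hw.2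
      rw [max_eq_right hu'x] at h2
      exact ⟨w, ⟨le_trans (le_trans (min_le_left _ _) hux) h1,
        le_trans h2 (le_max_right _ _)⟩, hwA⟩
  rintro p hp q hq z hz
  rcases hp with hp | hp <;> rcases hq with hq | hq
  · obtain ⟨i, hpi⟩ := mem_iUnion.1 hp
    obtain ⟨j, hqj⟩ := mem_iUnion.1 hq
    exact hRR i j p q hpi hqj z hz
  · obtain ⟨i, hpi⟩ := mem_iUnion.1 hp
    obtain ⟨j, hqj⟩ := mem_iUnion.1 hq
    obtain ⟨w, hw, hwA⟩ := hLR j i q p hqj hpi z (by rwa [uIcc_comm])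
    exact ⟨w, by rwa [min_comm q.1 p.1, max_comm q.1 p.1] at hw, hwA⟩
  · obtain ⟨i, hpi⟩ := mem_iUnion.1 hp
    obtain ⟨j, hqj⟩ := mem_iUnion.1 hq
    exact hLR i j p q hpi hqj z hz
  · obtain ⟨i, hpi⟩ := mem_iUnion.1 hp
    obtain ⟨j, hqj⟩ := mem_iUnion.1 hq
    exact hLL i j p q hpi hqj z hz

end GNlem
end Stmt14Aux

theorem stmt14 (f : ℝ → Set ℝ) (hSV : SV f) (husc : USC f)
    (hconn : IsConnected (SVGraph f)) (hwivp : WIVP f)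
    (x₀ y₀ : ℝ) (hp : (x₀, y₀) ∈ SVGraph f) :
    ∃ g : ℝ → Set ℝ, USC g ∧
      (∀ x ∈ Icc (0:ℝ) 1,
        (g x).Nonempty ∧ IsCompact (g x) ∧ IsConnected (g x) ∧ g x ⊆ Icc (0:ℝ) 1) ∧
      (x₀, y₀) ∈ SVGraph g ∧ SVGraph g ⊆ SVGraph f := by
  classical
  obtain ⟨hx₀, hy₀⟩ := hp
  have hGc : IsClosed (SVGraph f) := Stmt14Aux.graph_closed hSV husc
  have hchR : ∀ n : ℕ, ∃ c : ℕ → ℝ, c 0 = y₀ ∧ (∀ k, c k ∈ f (Stmt14Aux.sR x₀ n k)) ∧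
      ∀ k, ∀ y ∈ uIcc (c k) (c (k+1)),
        ∃ x ∈ uIcc (Stmt14Aux.sR x₀ n k) (Stmt14Aux.sR x₀ n (k+1)), y ∈ f x :=
    fun n => Stmt14Aux.exists_chain hwivp (Stmt14Aux.sR x₀ n) (fun _ => Stmt14Aux.sR_mem hx₀) y₀
      (by rw [Stmt14Aux.sR_zero hx₀.2]; exact hy₀)
  choose cR hcR0 hcRf hcRcov using hchR
  have hchL : ∀ n : ℕ, ∃ c : ℕ → ℝ, c 0 = y₀ ∧ (∀ k, c k ∈ f (Stmt14Aux.sL x₀ n k)) ∧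
      ∀ k, ∀ y ∈ uIcc (c k) (c (k+1)),
        ∃ x ∈ uIcc (Stmt14Aux.sL x₀ n k) (Stmt14Aux.sL x₀ n (k+1)), y ∈ f x :=
    fun n => Stmt14Aux.exists_chain hwivp (Stmt14Aux.sL x₀ n) (fun _ => Stmt14Aux.sL_mem hx₀) y₀
      (by rw [Stmt14Aux.sL_zero hx₀.1]; exact hy₀)
  choose cL hcL0 hcLf hcLcov using hchL
  set A : ℕ → Set (ℝ×ℝ) := fun n => Stmt14Aux.GN x₀ (cR n) (cL n) n with hAdef
  have h00 : ∀ n, (x₀, y₀) ∈ A n := fun n => Stmt14Aux.GN_base hx₀ (hcR0 n)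
  have hNE : ∀ n, (A n).Nonempty := fun n => ⟨_, h00 n⟩
  have hsec : ∀ n, ∀ x ∈ Icc (0:ℝ) 1, ∃ y ∈ Icc (0:ℝ) 1, (x, y) ∈ A n :=
    fun n x hx => Stmt14Aux.GN_sec hSV hx₀ (hcRf n) (hcLf n) hx
  have hnear : ∀ n, ∀ q ∈ A n, ∃ r ∈ SVGraph f, dist q r ≤ 1/((n:ℝ)+1) :=
    fun n => Stmt14Aux.GN_near hx₀ (hcRcov n) (hcLcov n)
  have hIVP : ∀ n, ∀ p ∈ A n, ∀ q ∈ A n, ∀ z ∈ uIcc p.2 q.2,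
      ∃ w, w ∈ Icc (min p.1 q.1) (max p.1 q.1) ∧ (w, z) ∈ A n :=
    fun n => Stmt14Aux.GN_ivp hx₀ (hcR0 n) (hcL0 n)
  set Γ : Set (ℝ×ℝ) := Stmt14Aux.ULim A with hΓdef
  have hΓcl : IsClosed Γ := Stmt14Aux.ulim_closed A
  have hΓG : Γ ⊆ SVGraph f := Stmt14Aux.ulim_subset_closed hGc hnear
  have hΓ00 : (x₀, y₀) ∈ Γ := Stmt14Aux.ulim_mem_of_all h00
  have hsecΓ : ∀ x ∈ Icc (0:ℝ) 1, ∃ y, (x, y) ∈ Γ :=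
    fun x hx => Stmt14Aux.ulim_sec (fun n => hsec n x hx)
  have hord : ∀ x y y' z : ℝ, (x,y) ∈ Γ → (x,y') ∈ Γ → z ∈ Icc y y' → (x,z) ∈ Γ :=
    fun x y y' z hy hy' hz => Stmt14Aux.ulim_interval hNE hIVP hy hy' hz
  refine ⟨fun x => {y | (x, y) ∈ Γ}, ?_, ?_, ⟨hx₀, hΓ00⟩, ?_⟩
  · -- upper semicontinuity
    intro x hx Uo hUo hgU
    by_contra hno
    push_neg at hno
    have hfail : ∀ m : ℕ, ∃ v, (v ∈ Metric.ball x (1/((m:ℝ)+1)) ∩ Icc (0:ℝ) 1) ∧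
        ∃ yv, (v, yv) ∈ Γ ∧ yv ∉ Uo := by
      intro m
      obtain ⟨v, hv, hnsub⟩ := hno (Metric.ball x (1/((m:ℝ)+1))) Metric.isOpen_ball
        (Metric.mem_ball_self (by positivity))
      obtain ⟨yv, hyv, hyvU⟩ := not_subset.1 hnsub
      exact ⟨v, hv, yv, hyv, hyvU⟩
    choose v hv y hyΓ hyU using hfail
    have hvx : Filter.Tendsto v Filter.atTop (nhds x) := by
      have hd : ∀ m, dist (v m) x ≤ 1/((m:ℝ)+1) := fun m => le_of_lt (Metric.mem_ball.1 (hv m).1)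
      have h0 := squeeze_zero (fun m => dist_nonneg) hd tendsto_one_div_add_atTop_nhds_zero_nat
      exact tendsto_iff_dist_tendsto_zero.2 h0
    have hyI : ∀ m, y m ∈ Icc (0:ℝ) 1 :=
      fun m => (hSV _ (hv m).2).2.2 ((hΓG (hyΓ m)).2)
    obtain ⟨a, haI, φ, hφ, hconv⟩ := isCompact_Icc.tendsto_subseq hyI
    have hpair : Filter.Tendsto (fun m => ((v (φ m)), y (φ m))) Filter.atTop (nhds (x, a)) :=
      (hvx.comp hφ.tendsto_atTop).prodMk_nhds hconv
    have haΓ : (x, a) ∈ Γ :=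
      hΓcl.mem_of_tendsto hpair (Filter.Eventually.of_forall (fun m => hyΓ (φ m)))
    have haU : a ∈ Uo := hgU haΓ
    obtain ⟨m, hm⟩ := (hconv.eventually (hUo.mem_nhds haU)).exists
    exact hyU (φ m) hm
  · -- values are nonempty compact connected subsets of [0,1]
    intro x hx
    have hclosed : IsClosed {y | (x, y) ∈ Γ} := hΓcl.preimage (Continuous.prodMk_right x)
    have hsub : {y : ℝ | (x, y) ∈ Γ} ⊆ Icc (0:ℝ) 1 := fun y hy => (hSV x hx).2.2 ((hΓG hy).2)
    obtain ⟨y, hy⟩ := hsecΓ x hx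
    refine ⟨⟨y, hy⟩, IsCompact.of_isClosed_subset isCompact_Icc hclosed hsub, ⟨⟨y, hy⟩, ?_⟩, hsub⟩
    rw [isPreconnected_iff_ordConnected]
    exact ⟨fun a ha b hb z hz => hord x a b z ha hb hz⟩
  · -- contained in the graph of f
    rintro ⟨a, b⟩ ⟨haI, hb⟩
    exact hΓG hb
end

section
/- Let f : [0,1] → 2^[0,1] be upper semicontinuous with connected graph and having the Weak Intermediate Value Property. Then there exists a family F of upper semicontinuous functions g : [0,1] → C([0,1]) (each with nonempty compact connected values), each having the Weak Intermediate Value Property, such that G(f) = ∪_{g ∈ F} G(g). -/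
open Set

namespace Stmt15

/-- The clamped grid. -/
noncomputable def tg (a : ℝ) (n : ℕ) (i : ℤ) : ℝ :=
  max 0 (min 1 (a + (i : ℝ) / (n + 1)))

lemma tg_mem (a : ℝ) (n : ℕ) (i : ℤ) : tg a n i ∈ Icc (0:ℝ) 1 := by
  unfold tg
  constructor
  · exact le_max_left _ _
  · exact max_le (by norm_num) (min_le_left _ _)

lemma tg_mono (a : ℝ) (n : ℕ) {i j : ℤ} (h : i ≤ j) : tg a n i ≤ tg a n j := by
  unfold tg
  have hij : (i:ℝ) ≤ (j:ℝ) := by exact_mod_cast h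
  have hpos : (0:ℝ) < n + 1 := by positivity
  gcongr

lemma tg_zero {a : ℝ} (ha : a ∈ Icc (0:ℝ) 1) (n : ℕ) : tg a n 0 = a := by
  unfold tg
  obtain ⟨h0, h1⟩ := ha
  simp only [Int.cast_zero, zero_div, add_zero]
  rw [min_eq_right h1, max_eq_right h0]

lemma tg_bot {a : ℝ} (ha : a ∈ Icc (0:ℝ) 1) (n : ℕ) : tg a n (-(n+1 : ℤ)) = 0 := by
  unfold tg
  have hpos : (0:ℝ) < n + 1 := by positivity
  have h : a + ((-(n+1):ℤ) : ℝ) / (n + 1) = a - 1 := by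
    push_cast
    field_simp
    ring
  rw [h, min_eq_right (by linarith [ha.2]), max_eq_left (by linarith [ha.2])]

lemma tg_top {a : ℝ} (ha : a ∈ Icc (0:ℝ) 1) (n : ℕ) : tg a n (n+1 : ℤ) = 1 := by
  unfold tg
  have hpos : (0:ℝ) < n + 1 := by positivity
  have h : a + (((n:ℤ)+1 : ℤ) : ℝ) / (n + 1) = a + 1 := by
    push_cast
    field_simp
  rw [h, min_eq_left (by linarith [ha.1]), max_eq_right (by linarith [ha.1])]

lemma tg_step (a : ℝ) (n : ℕ) (i : ℤ) :
    tg a n (i+1) - tg a n i ≤ 1 / (n+1) := by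
  unfold tg
  have hpos : (0:ℝ) < n + 1 := by positivity
  have h : a + ((i+1 : ℤ) : ℝ) / (n + 1) = a + (i:ℝ)/(n+1) + 1/(n+1) := by
    push_cast
    field_simp
    ring
  rw [h]
  have h1 : (0:ℝ) ≤ 1/(n+1) := by positivity
  simp only [min_def, max_def]
  split_ifs <;> linarith

variable (f : ℝ → Set ℝ)

open Classical in
noncomputable def step (hw : WIVP f) (x₁ x₂ y : ℝ) : ℝ :=
  if h : x₁ ∈ Icc (0:ℝ) 1 ∧ x₂ ∈ Icc (0:ℝ) 1 ∧ x₁ ≠ x₂ ∧ y ∈ f x₁ then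
    (hw x₁ h.1 x₂ h.2.1 h.2.2.1 y h.2.2.2).choose
  else y

lemma step_spec (hw : WIVP f) {x₁ x₂ y : ℝ} (h₁ : x₁ ∈ Icc (0:ℝ) 1)
    (h₂ : x₂ ∈ Icc (0:ℝ) 1) (hy : y ∈ f x₁) :
    step f hw x₁ x₂ y ∈ f x₂ ∧
      ∀ z ∈ uIcc y (step f hw x₁ x₂ y), ∃ x ∈ uIcc x₁ x₂, z ∈ f x := by
  by_cases hne : x₁ = x₂
  · have hstep : step f hw x₁ x₂ y = y := by
      unfold step
      rw [dif_neg]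
      rintro ⟨-, -, h, -⟩
      exact h hne
    rw [hstep]
    refine ⟨hne ▸ hy, ?_⟩
    intro z hz
    rw [uIcc_self, mem_singleton_iff] at hz
    exact ⟨x₁, left_mem_uIcc, hz ▸ hy⟩
  · have hcond : x₁ ∈ Icc (0:ℝ) 1 ∧ x₂ ∈ Icc (0:ℝ) 1 ∧ x₁ ≠ x₂ ∧ y ∈ f x₁ :=
      ⟨h₁, h₂, hne, hy⟩
    have hstep : step f hw x₁ x₂ y
        = (hw x₁ hcond.1 x₂ hcond.2.1 hcond.2.2.1 y hcond.2.2.2).choose := by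
      unfold step
      rw [dif_pos hcond]
    rw [hstep]
    exact (hw x₁ hcond.1 x₂ hcond.2.1 hcond.2.2.1 y hcond.2.2.2).choose_spec

noncomputable def chainR (hw : WIVP f) (a b : ℝ) (n : ℕ) : ℕ → ℝ
  | 0 => b
  | (i+1) => step f hw (tg a n i) (tg a n (i+1)) (chainR hw a b n i)

noncomputable def chainL (hw : WIVP f) (a b : ℝ) (n : ℕ) : ℕ → ℝ
  | 0 => b
  | (j+1) => step f hw (tg a n (-(j:ℤ))) (tg a n (-(j:ℤ)-1)) (chainL hw a b n j)

noncomputable def chain (hw : WIVP f) (a b : ℝ) (n : ℕ) (i : ℤ) : ℝ :=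
  if 0 ≤ i then chainR f hw a b n i.toNat else chainL f hw a b n (-i).toNat

lemma chain_nat (hw : WIVP f) (a b : ℝ) (n : ℕ) (m : ℕ) :
    chain f hw a b n (m : ℤ) = chainR f hw a b n m := by
  unfold chain
  rw [if_pos (by exact_mod_cast Nat.zero_le m), Int.toNat_natCast]

lemma chain_neg (hw : WIVP f) (a b : ℝ) (n : ℕ) (j : ℕ) :
    chain f hw a b n (-(j:ℤ)) = chainL f hw a b n j := by
  unfold chain
  rcases Nat.eq_zero_or_pos j with rfl | hj
  · simp [chainR, chainL]
  · rw [if_neg (by omega), neg_neg, Int.toNat_natCast]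

lemma chainR_mem (hw : WIVP f) {a b : ℝ} (ha : a ∈ Icc (0:ℝ) 1) (hb : b ∈ f a)
    (n : ℕ) : ∀ m : ℕ, chainR f hw a b n m ∈ f (tg a n (m:ℤ)) := by
  intro m
  induction m with
  | zero => rw [Int.natCast_zero, tg_zero ha]; exact hb
  | succ m ih =>
      have h := (step_spec f hw (tg_mem a n (m:ℤ)) (tg_mem a n ((m:ℤ)+1)) ih).1
      have hc : ((m+1 : ℕ) : ℤ) = (m:ℤ)+1 := by push_cast; ring
      rw [hc]
      exact h

lemma chainL_mem (hw : WIVP f) {a b : ℝ} (ha : a ∈ Icc (0:ℝ) 1) (hb : b ∈ f a)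
    (n : ℕ) : ∀ j : ℕ, chainL f hw a b n j ∈ f (tg a n (-(j:ℤ))) := by
  intro j
  induction j with
  | zero => rw [Int.natCast_zero, neg_zero, tg_zero ha]; exact hb
  | succ j ih =>
      have h := (step_spec f hw (tg_mem a n (-(j:ℤ))) (tg_mem a n (-(j:ℤ)-1)) ih).1
      have hc : (-((j+1 : ℕ):ℤ)) = -(j:ℤ)-1 := by push_cast; ring
      rw [hc]
      exact h

/-- main chain invariant + coverage -/
lemma chain_mem (hw : WIVP f) {a b : ℝ} (ha : a ∈ Icc (0:ℝ) 1) (hb : b ∈ f a)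
    (n : ℕ) : ∀ i : ℤ, chain f hw a b n i ∈ f (tg a n i) := by
  intro i
  rcases le_or_gt 0 i with hi | hi
  · obtain ⟨m, rfl⟩ := Int.eq_ofNat_of_zero_le hi
    rw [chain_nat]
    exact chainR_mem f hw ha hb n m
  · obtain ⟨j, rfl⟩ : ∃ j : ℕ, i = -(j:ℤ) := ⟨(-i).toNat, by omega⟩
    rw [chain_neg]
    exact chainL_mem f hw ha hb n j

lemma chain_cov (hw : WIVP f) {a b : ℝ} (ha : a ∈ Icc (0:ℝ) 1) (hb : b ∈ f a)
    (n : ℕ) (i : ℤ) :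
    ∀ z ∈ uIcc (chain f hw a b n i) (chain f hw a b n (i+1)),
      ∃ x ∈ Icc (tg a n i) (tg a n (i+1)), z ∈ f x := by
  intro z hz
  rcases le_or_gt 0 i with hi | hi
  · obtain ⟨m, rfl⟩ := Int.eq_ofNat_of_zero_le hi
    have hc : ((m:ℤ)+1) = ((m+1 : ℕ) : ℤ) := by push_cast; ring
    rw [chain_nat, hc, chain_nat] at hz
    have h := (step_spec f hw (tg_mem a n (m:ℤ)) (tg_mem a n ((m:ℤ)+1))
        (chainR_mem f hw ha hb n m)).2
    have hz' : z ∈ uIcc (chainR f hw a b n m) (chainR f hw a b n (m+1)) := hz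
    obtain ⟨x, hx, hzx⟩ := h z (by
      show z ∈ uIcc (chainR f hw a b n m)
        (step f hw (tg a n (m:ℤ)) (tg a n ((m:ℤ)+1)) (chainR f hw a b n m))
      exact hz')
    refine ⟨x, ?_, hzx⟩
    rw [hc]
    rwa [uIcc_of_le (tg_mono a n (by omega))] at hx
  · obtain ⟨j, rfl⟩ : ∃ j : ℕ, i = -((j:ℤ)+1) := ⟨(-i-1).toNat, by omega⟩
    have hc1 : (-((j:ℤ)+1)) = -(((j+1:ℕ)):ℤ) := by push_cast; ring
    have hc2 : (-((j:ℤ)+1)+1) = -((j:ℕ):ℤ) := by push_cast; ring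
    rw [hc2, chain_neg, hc1, chain_neg] at hz
    have h := (step_spec f hw (tg_mem a n (-(j:ℤ))) (tg_mem a n (-(j:ℤ)-1))
        (chainL_mem f hw ha hb n j)).2
    have hz' : z ∈ uIcc (chainL f hw a b n j) (chainL f hw a b n (j+1)) := by
      rw [uIcc_comm] at hz
      exact hz
    obtain ⟨x, hx, hzx⟩ := h z (by
      show z ∈ uIcc (chainL f hw a b n j)
        (step f hw (tg a n (-(j:ℤ))) (tg a n (-(j:ℤ)-1)) (chainL f hw a b n j))
      exact hz')
    refine ⟨x, ?_, hzx⟩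
    have he : -((j:ℤ)+1) = -(j:ℤ)-1 := by ring
    have he2 : -((j:ℤ)+1)+1 = -(j:ℤ) := by ring
    rw [he2, he]
    rwa [uIcc_comm, uIcc_of_le (tg_mono a n (by omega))] at hx

noncomputable def Rect (hw : WIVP f) (a b : ℝ) (n : ℕ) (i : ℤ) : Set (ℝ × ℝ) :=
  Icc (tg a n i) (tg a n (i+1)) ×ˢ uIcc (chain f hw a b n i) (chain f hw a b n (i+1))

noncomputable def Gam (hw : WIVP f) (a b : ℝ) (n : ℕ) : Set (ℝ × ℝ) :=
  ⋃ i ∈ Icc (-(n+1 : ℤ)) n, Rect f hw a b n i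


lemma chain_zero (hw : WIVP f) (a b : ℝ) (n : ℕ) : chain f hw a b n 0 = b := by
  unfold chain
  rw [if_pos le_rfl]
  rfl

lemma Rect_fst {hw : WIVP f} {a b : ℝ} {n : ℕ} {i : ℤ} {q : ℝ × ℝ}
    (h : q ∈ Rect f hw a b n i) : q.1 ∈ Icc (tg a n i) (tg a n (i+1)) := h.1

lemma Rect_snd {hw : WIVP f} {a b : ℝ} {n : ℕ} {i : ℤ} {q : ℝ × ℝ}
    (h : q ∈ Rect f hw a b n i) :
    q.2 ∈ uIcc (chain f hw a b n i) (chain f hw a b n (i+1)) := h.2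

lemma Rect_subset (hSV : SV f) (hw : WIVP f) {a b : ℝ} (ha : a ∈ Icc (0:ℝ) 1)
    (hb : b ∈ f a) (n : ℕ) (i : ℤ) :
    Rect f hw a b n i ⊆ Icc (0:ℝ) 1 ×ˢ Icc (0:ℝ) 1 := by
  intro q hq
  constructor
  · exact Icc_subset_Icc (tg_mem a n i).1 (tg_mem a n (i+1)).2 (Rect_fst f hq)
  · have h1 : chain f hw a b n i ∈ Icc (0:ℝ) 1 :=
      (hSV _ (tg_mem a n i)).2.2 (chain_mem f hw ha hb n i)
    have h2 : chain f hw a b n (i+1) ∈ Icc (0:ℝ) 1 :=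
      (hSV _ (tg_mem a n (i+1))).2.2 (chain_mem f hw ha hb n (i+1))
    have : uIcc (chain f hw a b n i) (chain f hw a b n (i+1)) ⊆ Icc (0:ℝ) 1 := by
      rw [← uIcc_of_le (by norm_num : (0:ℝ) ≤ 1)] at h1 h2 ⊢
      exact uIcc_subset_uIcc h1 h2
    exact this (Rect_snd f hq)

lemma Gam_subset (hSV : SV f) (hw : WIVP f) {a b : ℝ} (ha : a ∈ Icc (0:ℝ) 1)
    (hb : b ∈ f a) (n : ℕ) :
    Gam f hw a b n ⊆ Icc (0:ℝ) 1 ×ˢ Icc (0:ℝ) 1 := by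
  intro q hq
  obtain ⟨i, _, hqi⟩ := mem_iUnion₂.1 hq
  exact Rect_subset f hSV hw ha hb n i hqi

lemma mem_Gam_self (hw : WIVP f) {a b : ℝ} (ha : a ∈ Icc (0:ℝ) 1) (n : ℕ) :
    (a, b) ∈ Gam f hw a b n := by
  have h0 : (0:ℤ) ∈ Icc (-(n+1:ℤ)) (n:ℤ) := ⟨by omega, by omega⟩
  apply mem_biUnion h0
  · constructor
    · have h01 : tg a n 0 ≤ tg a n (0+1) := tg_mono a n (by omega)
      rw [tg_zero ha n] at h01
      exact ⟨le_of_eq ((tg_zero ha n) : tg a n 0 = (a,b).1), h01⟩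
    · show b ∈ uIcc (chain f hw a b n 0) (chain f hw a b n 1)
      rw [chain_zero]
      exact left_mem_uIcc

lemma Gam_compact (hw : WIVP f) (a b : ℝ) (n : ℕ) : IsCompact (Gam f hw a b n) := by
  apply Set.Finite.isCompact_biUnion (finite_Icc _ _)
  intro i _
  apply IsCompact.prod isCompact_Icc
  rw [uIcc]
  exact isCompact_Icc

lemma Gam_approx (hw : WIVP f) {a b : ℝ} (ha : a ∈ Icc (0:ℝ) 1) (hb : b ∈ f a)
    (n : ℕ) {q : ℝ × ℝ} (hq : q ∈ Gam f hw a b n) :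
    ∃ q' ∈ SVGraph f, dist q q' ≤ 1/(n+1) := by
  obtain ⟨i, _, hqi⟩ := mem_iUnion₂.1 hq
  obtain ⟨x, hx, hq2⟩ := chain_cov f hw ha hb n i q.2 (Rect_snd f hqi)
  refine ⟨(x, q.2), ⟨Icc_subset_Icc (tg_mem a n i).1 (tg_mem a n (i+1)).2 hx, hq2⟩, ?_⟩
  rw [Prod.dist_eq]
  have hq1 := Rect_fst f hqi
  have hstep := tg_step a n i
  simp only [mem_Icc] at hx hq1
  apply max_le
  · show dist q.1 x ≤ _
    rw [Real.dist_eq, abs_le]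
    constructor <;> linarith
  · show dist q.2 q.2 ≤ _
    rw [dist_self]
    positivity

lemma exists_cell (a : ℝ) (n : ℕ) {j k : ℤ} (hjk : j < k) {x : ℝ}
    (hx : x ∈ Icc (tg a n j) (tg a n k)) :
    ∃ i, j ≤ i ∧ i < k ∧ x ∈ Icc (tg a n i) (tg a n (i+1)) := by
  have key : ∀ K : ℤ, j+1 ≤ K → (x ∈ Icc (tg a n j) (tg a n K) →
      ∃ i, j ≤ i ∧ i < K ∧ x ∈ Icc (tg a n i) (tg a n (i+1))) := by
    refine Int.le_induction ?_ ?_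
    · intro hx
      exact ⟨j, le_rfl, by omega, hx⟩
    · intro K hK ih hx
      rcases le_total x (tg a n K) with h | h
      · obtain ⟨i, h1, h2, h3⟩ := ih ⟨hx.1, h⟩
        exact ⟨i, h1, by omega, h3⟩
      · exact ⟨K, by omega, by omega, h, hx.2⟩
  exact key k hjk hx

lemma Gam_span (hw : WIVP f) {a b : ℝ} (ha : a ∈ Icc (0:ℝ) 1) (hb : b ∈ f a)
    (n : ℕ) {x : ℝ} (hx : x ∈ Icc (0:ℝ) 1) :
    ∃ y, (x, y) ∈ Gam f hw a b n := by
  have hx' : x ∈ Icc (tg a n (-(n+1:ℤ))) (tg a n (n+1:ℤ)) := by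
    rw [tg_bot ha, tg_top ha]
    exact hx
  obtain ⟨i, h1, h2, h3⟩ := exists_cell a n (by omega) hx'
  have hi : i ∈ Icc (-(n+1:ℤ)) (n:ℤ) := ⟨by omega, by omega⟩
  exact ⟨chain f hw a b n i, mem_biUnion hi ⟨h3, left_mem_uIcc⟩⟩

lemma chainsets_conn (hw : WIVP f) (a b : ℝ) (n : ℕ) {u v : ℝ} (huv : u ≤ v)
    {j k : ℤ} (hjk : j ≤ k) (hu : u ≤ tg a n (j+1)) (hv : tg a n k ≤ v) :
    IsConnected (⋃ i ∈ Icc j k,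
      (Rect f hw a b n i ∩ (Icc u v ×ˢ (univ : Set ℝ)))) := by
  have key : ∀ K : ℤ, j ≤ K → (tg a n K ≤ v → IsConnected (⋃ i ∈ Icc j K,
      (Rect f hw a b n i ∩ (Icc u v ×ˢ (univ : Set ℝ))))) := by
    refine Int.le_induction ?_ ?_
    · intro hv
      rw [Icc_self, biUnion_singleton]
      unfold Rect
      rw [prod_inter_prod, inter_univ, Icc_inter_Icc]
      constructor
      · apply Set.Nonempty.prod
        · rw [nonempty_Icc]
          refine sup_le (le_inf (tg_mono a n (by omega : j ≤ j+1)) hv) (le_inf hu huv)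
        · exact nonempty_uIcc
      · exact ((convex_Icc _ _).prod (convex_uIcc _ _)).isPreconnected
    · intro k hk ih hv
      have hvk : tg a n k ≤ v := le_trans (tg_mono a n (by omega : k ≤ k+1)) hv
      have hIcc : Icc j (k+1) = insert (k+1) (Icc j k) := by
        ext m
        simp only [mem_Icc, mem_insert_iff]
        omega
      rw [hIcc, biUnion_insert]
      have hpiece : IsConnected (Rect f hw a b n (k+1) ∩ (Icc u v ×ˢ (univ : Set ℝ))) := by
        unfold Rect
        rw [prod_inter_prod, inter_univ, Icc_inter_Icc]
        constructor
        · apply Set.Nonempty.prod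
          · rw [nonempty_Icc]
            refine sup_le (le_inf (tg_mono a n (by omega : k+1 ≤ k+1+1)) hv) ?_
            exact le_inf (le_trans hu (tg_mono a n (by omega : j+1 ≤ k+1+1))) huv
          · exact nonempty_uIcc
        · exact ((convex_Icc _ _).prod (convex_uIcc _ _)).isPreconnected
      apply IsConnected.union ?_ hpiece (ih hvk)
      refine ⟨(tg a n (k+1), chain f hw a b n (k+1)), ?_, ?_⟩
      · refine ⟨⟨⟨le_refl _, tg_mono a n (by omega : k+1 ≤ k+1+1)⟩, left_mem_uIcc⟩, ?_, trivial⟩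
        exact ⟨le_trans hu (tg_mono a n (by omega : j+1 ≤ k+1)), hv⟩
      · apply mem_biUnion (show k ∈ Icc j k from ⟨hk, le_refl k⟩)
        refine ⟨⟨⟨tg_mono a n (by omega : k ≤ k+1), le_refl _⟩, right_mem_uIcc⟩, ?_, trivial⟩
        exact ⟨le_trans hu (tg_mono a n (by omega : j+1 ≤ k+1)), hv⟩
  exact key k hjk hv

lemma Gam_conn (hSV : SV f) (hw : WIVP f) {a b : ℝ} (ha : a ∈ Icc (0:ℝ) 1)
    (hb : b ∈ f a) (n : ℕ) : IsConnected (Gam f hw a b n) := by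
  have h := chainsets_conn f hw a b n (by norm_num : (0:ℝ) ≤ 1)
    (by omega : -(n+1:ℤ) ≤ n) (tg_mem a n _).1 (tg_mem a n _).2
  have heq : (⋃ i ∈ Icc (-(n+1:ℤ)) n,
      (Rect f hw a b n i ∩ (Icc (0:ℝ) 1 ×ˢ (univ : Set ℝ)))) = Gam f hw a b n := by
    apply iUnion₂_congr
    intro i _
    apply inter_eq_left.2
    intro q hq
    exact ⟨Icc_subset_Icc (tg_mem a n i).1 (tg_mem a n (i+1)).2 (Rect_fst f hq), trivial⟩
  rwa [heq] at h

lemma Gam_key_aux (hw : WIVP f) (a b : ℝ) (n : ℕ) {j k : ℤ} (hjk : j ≤ k)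
    (hj : j ∈ Icc (-(n+1:ℤ)) n) (hk : k ∈ Icc (-(n+1:ℤ)) n)
    {q q' : ℝ × ℝ} (hq : q ∈ Rect f hw a b n j) (hq' : q' ∈ Rect f hw a b n k) :
    ∀ c ∈ uIcc q.2 q'.2, ∃ ξ ∈ uIcc q.1 q'.1, (ξ, c) ∈ Gam f hw a b n := by
  intro c hc
  rcases eq_or_lt_of_le hjk with rfl | hlt
  · refine ⟨q.1, left_mem_uIcc, ?_⟩
    apply mem_biUnion hj
    have h1 := Rect_fst f hq
    have h2 := uIcc_subset_uIcc (Rect_snd f hq) (Rect_snd f hq') hc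
    exact ⟨h1, h2⟩
  · have huv : q.1 ≤ q'.1 :=
      le_trans (Rect_fst f hq).2 (le_trans (tg_mono a n (by omega)) (Rect_fst f hq').1)
    have hC := chainsets_conn f hw a b n huv hjk (Rect_fst f hq).2 (Rect_fst f hq').1
    set C := ⋃ i ∈ Icc j k, (Rect f hw a b n i ∩ (Icc q.1 q'.1 ×ˢ (univ : Set ℝ)))
      with hCdef
    have hqC : q ∈ C := by
      apply mem_biUnion (show j ∈ Icc j k from ⟨le_refl j, hjk⟩)
      exact ⟨hq, ⟨le_refl _, huv⟩, trivial⟩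
    have hq'C : q' ∈ C := by
      apply mem_biUnion (show k ∈ Icc j k from ⟨hjk, le_refl k⟩)
      exact ⟨hq', ⟨huv, le_refl _⟩, trivial⟩
    have hT : IsPreconnected (Prod.snd '' C) :=
      hC.isPreconnected.image _ continuous_snd.continuousOn
    have hq2T : q.2 ∈ Prod.snd '' C := ⟨q, hqC, rfl⟩
    have hq'2T : q'.2 ∈ Prod.snd '' C := ⟨q', hq'C, rfl⟩
    have hcT : c ∈ Prod.snd '' C := by
      rcases le_total q.2 q'.2 with h | h
      · rw [uIcc_of_le h] at hc
        exact hT.Icc_subset hq2T hq'2T hc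
      · rw [uIcc_of_ge h] at hc
        exact hT.Icc_subset hq'2T hq2T hc
    obtain ⟨w, hwC, hw2⟩ := hcT
    obtain ⟨i, hi, hw⟩ := mem_iUnion₂.1 hwC
    refine ⟨w.1, ?_, ?_⟩
    · rw [uIcc_of_le huv]
      exact hw.2.1
    · rw [← hw2, Prod.mk.eta]
      have hi' : i ∈ Icc (-(n+1:ℤ)) (n:ℤ) := by
        simp only [mem_Icc] at hi hj hk ⊢
        omega
      exact mem_biUnion hi' hw.1

lemma Gam_key (hw : WIVP f) (a b : ℝ) (n : ℕ) {q q' : ℝ × ℝ}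
    (hq : q ∈ Gam f hw a b n) (hq' : q' ∈ Gam f hw a b n) :
    ∀ c ∈ uIcc q.2 q'.2, ∃ ξ ∈ uIcc q.1 q'.1, (ξ, c) ∈ Gam f hw a b n := by
  intro c hc
  obtain ⟨j, hj, hqj⟩ := mem_iUnion₂.1 hq
  obtain ⟨k, hk, hq'k⟩ := mem_iUnion₂.1 hq'
  rcases le_total j k with h | h
  · exact Gam_key_aux f hw a b n h hj hk hqj hq'k c hc
  · obtain ⟨ξ, hξ, hmem⟩ := Gam_key_aux f hw a b n h hk hj hq'k hqj c (by
      rwa [uIcc_comm] at hc)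
    exact ⟨ξ, by rwa [uIcc_comm] at hξ, hmem⟩


/-! ### graph closedness -/

lemma graph_closed (hSV : SV f) (husc : USC f) : IsClosed (SVGraph f) := by
  rw [← isOpen_compl_iff, Metric.isOpen_iff]
  rintro ⟨x, y⟩ hq
  by_cases hx : x ∈ Icc (0:ℝ) 1
  · have hy : y ∉ f x := fun hy => hq ⟨hx, hy⟩
    obtain ⟨hne, hcomp, hsub⟩ := hSV x hx
    have hclosed : IsClosed (f x) := hcomp.isClosed
    have hd : 0 < Metric.infDist y (f x) :=
      (hclosed.notMem_iff_infDist_pos hne).1 hy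
    set d := Metric.infDist y (f x) with hddef
    have hU : IsOpen (Metric.thickening (d/2) (f x)) := Metric.isOpen_thickening
    have hfU : f x ⊆ Metric.thickening (d/2) (f x) :=
      Metric.self_subset_thickening (by positivity) _
    obtain ⟨V, hV, hxV, hVU⟩ := husc x hx _ hU hfU
    obtain ⟨ε1, hε1, hball⟩ := Metric.isOpen_iff.1 hV x hxV
    refine ⟨min ε1 (d/2), by positivity, ?_⟩
    rintro ⟨v, w⟩ hvw
    rw [Metric.mem_ball, Prod.dist_eq] at hvw
    have hv1 : dist v x < ε1 := lt_of_le_of_lt (le_max_left _ _)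
      (lt_of_lt_of_le hvw (min_le_left _ _))
    have hw1 : dist w y < d/2 := lt_of_le_of_lt (le_max_right _ _)
      (lt_of_lt_of_le hvw (min_le_right _ _))
    rintro ⟨hvIcc, hwv⟩
    have hfvU : f v ⊆ Metric.thickening (d/2) (f x) :=
      hVU v ⟨hball (Metric.mem_ball.2 hv1), hvIcc⟩
    obtain ⟨z, hz, hwz⟩ := Metric.mem_thickening_iff.1 (hfvU hwv)
    have : d ≤ dist y z := Metric.infDist_le_dist_of_mem hz
    have : dist y z ≤ dist y w + dist w z := dist_triangle _ _ _
    rw [dist_comm y w] at this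
    linarith
  · obtain ⟨ε, hε, hball⟩ := Metric.isOpen_iff.1 (isClosed_Icc (a := (0:ℝ)) (b := 1)).isOpen_compl x hx
    refine ⟨ε, hε, ?_⟩
    rintro ⟨v, w⟩ hvw
    rw [Metric.mem_ball, Prod.dist_eq] at hvw
    have hv1 : dist v x < ε := lt_of_le_of_lt (le_max_left _ _) hvw
    intro hG
    exact hball (Metric.mem_ball.2 hv1) hG.1

/-! ### ultrafilter limit set -/

noncomputable def UF : Ultrafilter ℕ := Ultrafilter.of Filter.atTop

lemma UF_le : (UF : Filter ℕ) ≤ Filter.atTop := Ultrafilter.of_le _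

noncomputable def Kp (hw : WIVP f) (a b : ℝ) : Set (ℝ × ℝ) :=
  {q | ∀ ε > 0, {n | ∃ γ ∈ Gam f hw a b n, dist q γ < ε} ∈ UF}

lemma Kp_subset_sq (hSV : SV f) (hw : WIVP f) {a b : ℝ} (ha : a ∈ Icc (0:ℝ) 1)
    (hb : b ∈ f a) : Kp f hw a b ⊆ Icc (0:ℝ) 1 ×ˢ Icc (0:ℝ) 1 := by
  intro q hq
  have hclosed : IsClosed (Icc (0:ℝ) 1 ×ˢ Icc (0:ℝ) 1) :=
    isClosed_Icc.prod isClosed_Icc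
  rw [← hclosed.closure_eq]
  rw [Metric.mem_closure_iff]
  intro ε hε
  obtain ⟨n, hn⟩ := Filter.nonempty_of_mem (hq ε hε)
  obtain ⟨γ, hγ, hd⟩ := hn
  exact ⟨γ, Gam_subset f hSV hw ha hb n hγ, hd⟩

lemma Kp_closed (hw : WIVP f) (a b : ℝ) : IsClosed (Kp f hw a b) := by
  apply isClosed_of_closure_subset
  intro q hq
  intro ε hε
  rw [Metric.mem_closure_iff] at hq
  obtain ⟨q', hq', hdq⟩ := hq (ε/2) (by positivity)
  refine Filter.mem_of_superset (hq' (ε/2) (by positivity)) ?_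
  rintro n ⟨γ, hγ, hd⟩
  exact ⟨γ, hγ, by
    calc dist q γ ≤ dist q q' + dist q' γ := dist_triangle _ _ _
    _ < ε := by linarith⟩

lemma Kp_compact (hSV : SV f) (hw : WIVP f) {a b : ℝ} (ha : a ∈ Icc (0:ℝ) 1)
    (hb : b ∈ f a) : IsCompact (Kp f hw a b) :=
  IsCompact.of_isClosed_subset (isCompact_Icc.prod isCompact_Icc)
    (Kp_closed f hw a b) (Kp_subset_sq f hSV hw ha hb)

lemma mem_Kp_of_tendsto (hw : WIVP f) {a b : ℝ} {γ : ℕ → ℝ × ℝ} {q : ℝ × ℝ}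
    (hmem : {n | γ n ∈ Gam f hw a b n} ∈ UF)
    (ht : Filter.Tendsto γ (UF : Filter ℕ) (nhds q)) : q ∈ Kp f hw a b := by
  intro ε hε
  have h1 : {n | dist (γ n) q < ε} ∈ UF := Metric.tendsto_nhds.1 ht ε hε
  refine Filter.mem_of_superset (Filter.inter_mem hmem h1) ?_
  rintro n ⟨h2, h3⟩
  exact ⟨γ n, h2, by rwa [dist_comm]⟩

lemma Kp_exists_tendsto (hw : WIVP f) {a b : ℝ} (ha : a ∈ Icc (0:ℝ) 1)
    {q : ℝ × ℝ} (hq : q ∈ Kp f hw a b) :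
    ∃ γ : ℕ → ℝ × ℝ, (∀ n, γ n ∈ Gam f hw a b n) ∧
      Filter.Tendsto γ (UF : Filter ℕ) (nhds q) := by
  have h := fun n => (Gam_compact f hw a b n).exists_infDist_eq_dist
    ⟨(a,b), mem_Gam_self f hw ha n⟩ q
  choose γ hγ hd using h
  refine ⟨γ, hγ, Metric.tendsto_nhds.2 ?_⟩
  intro ε hε
  refine Filter.mem_of_superset (hq ε hε) ?_
  rintro n ⟨γ', hγ', hd'⟩
  show dist (γ n) q < ε
  rw [dist_comm, ← hd n]
  exact lt_of_le_of_lt (Metric.infDist_le_dist_of_mem hγ') hd'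

lemma Kp_lim (hSV : SV f) (hw : WIVP f) {a b : ℝ} (ha : a ∈ Icc (0:ℝ) 1)
    (hb : b ∈ f a) {γ : ℕ → ℝ × ℝ} (hγ : ∀ n, γ n ∈ Gam f hw a b n) :
    ∃ z ∈ Kp f hw a b, Filter.Tendsto γ (UF : Filter ℕ) (nhds z) := by
  have hsq : IsCompact (Icc (0:ℝ) 1 ×ˢ Icc (0:ℝ) 1) := isCompact_Icc.prod isCompact_Icc
  have hle : ↑(UF.map γ) ≤ Filter.principal (Icc (0:ℝ) 1 ×ˢ Icc (0:ℝ) 1) := by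
    rw [Filter.le_principal_iff, Ultrafilter.mem_coe, Ultrafilter.mem_map]
    exact Filter.univ_mem' (fun n => Gam_subset f hSV hw ha hb n (hγ n))
  obtain ⟨z, hz, hzle⟩ := hsq.ultrafilter_le_nhds (UF.map γ) hle
  have ht : Filter.Tendsto γ (UF : Filter ℕ) (nhds z) := by
    rw [Filter.Tendsto, ← Ultrafilter.coe_map]
    exact hzle
  exact ⟨z, mem_Kp_of_tendsto f hw (Filter.univ_mem' hγ) ht, ht⟩

lemma mem_Kp_self (hw : WIVP f) {a b : ℝ} (ha : a ∈ Icc (0:ℝ) 1) :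
    (a, b) ∈ Kp f hw a b :=
  mem_Kp_of_tendsto f hw (Filter.univ_mem' (fun n => mem_Gam_self f hw ha n))
    tendsto_const_nhds

lemma Kp_subset_graph (hSV : SV f) (husc : USC f) (hw : WIVP f) {a b : ℝ}
    (ha : a ∈ Icc (0:ℝ) 1) (hb : b ∈ f a) : Kp f hw a b ⊆ SVGraph f := by
  intro q hq
  rw [← (graph_closed f hSV husc).closure_eq, Metric.mem_closure_iff]
  intro ε hε
  obtain ⟨N, hN⟩ := exists_nat_gt (2/ε)
  have hmemN : {n : ℕ | N ≤ n} ∈ UF := UF_le (Filter.mem_atTop N)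
  obtain ⟨n, hn1, hn2⟩ := Filter.nonempty_of_mem
    (Filter.inter_mem (hq (ε/2) (by positivity)) hmemN)
  obtain ⟨γ, hγ, hd⟩ := hn1
  obtain ⟨q', hq', hd'⟩ := Gam_approx f hw ha hb n hγ
  refine ⟨q', hq', ?_⟩
  have hinv : 1/((n:ℝ)+1) < ε/2 := by
    rw [div_lt_iff₀ (by positivity)]
    have h2 : 2/ε < (n:ℝ)+1 := by
      have : (N:ℝ) ≤ n := by exact_mod_cast hn2
      linarith
    rw [div_lt_iff₀ hε] at h2
    linarith
  calc dist q q' ≤ dist q γ + dist γ q' := dist_triangle _ _ _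
  _ < ε := by linarith [le_trans hd' (le_of_lt hinv)]

lemma Kp_span (hSV : SV f) (hw : WIVP f) {a b : ℝ} (ha : a ∈ Icc (0:ℝ) 1)
    (hb : b ∈ f a) {x : ℝ} (hx : x ∈ Icc (0:ℝ) 1) :
    ∃ y, (x, y) ∈ Kp f hw a b := by
  have h := fun n => Gam_span f hw ha hb n hx
  choose ys hys using h
  obtain ⟨z, hz, ht⟩ := Kp_lim f hSV hw ha hb (γ := fun n => (x, ys n)) hys
  have h1 : Filter.Tendsto (fun n => (x, ys n).1) (UF : Filter ℕ) (nhds z.1) :=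
    (continuous_fst.tendsto z).comp ht
  have h2 : z.1 = x := tendsto_nhds_unique h1 tendsto_const_nhds
  refine ⟨z.2, ?_⟩
  have : (x, z.2) = z := Prod.ext h2.symm rfl
  rwa [this]

/-! ### clamping -/

lemma clamp_mem (c u v : ℝ) : min (max c (min u v)) (max u v) ∈ uIcc u v := by
  rw [uIcc, mem_Icc]
  exact ⟨le_min (le_max_right _ _) min_le_max, min_le_right _ _⟩

lemma clamp_eq {c u v : ℝ} (h1 : min u v ≤ c) (h2 : c ≤ max u v) :
    min (max c (min u v)) (max u v) = c := by
  rw [max_eq_left h1, min_eq_left h2]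

lemma uIcc_lim {α A B : ℕ → ℝ} {x A0 B0 : ℝ}
    (hmem : ∀ n, α n ∈ uIcc (A n) (B n))
    (hα : Filter.Tendsto α (UF : Filter ℕ) (nhds x))
    (hA : Filter.Tendsto A (UF : Filter ℕ) (nhds A0))
    (hB : Filter.Tendsto B (UF : Filter ℕ) (nhds B0)) : x ∈ uIcc A0 B0 := by
  rw [uIcc, mem_Icc]
  have hlow : ∀ n, min (A n) (B n) ≤ α n := by
    intro n
    have := hmem n
    rw [uIcc, mem_Icc] at this
    exact this.1
  have hhigh : ∀ n, α n ≤ max (A n) (B n) := by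
    intro n
    have := hmem n
    rw [uIcc, mem_Icc] at this
    exact this.2
  constructor
  · exact le_of_tendsto_of_tendsto' (hA.min hB) hα hlow
  · exact le_of_tendsto_of_tendsto' hα (hA.max hB) hhigh

lemma Kp_fiber_ordconn (hSV : SV f) (hw : WIVP f) {a b : ℝ} (ha : a ∈ Icc (0:ℝ) 1)
    (hb : b ∈ f a) {x y y' c : ℝ} (hy : (x, y) ∈ Kp f hw a b)
    (hy' : (x, y') ∈ Kp f hw a b) (hcl : y ≤ c) (hcu : c ≤ y') :
    (x, c) ∈ Kp f hw a b := by
  obtain ⟨γ, hγ, ht⟩ := Kp_exists_tendsto f hw ha hy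
  obtain ⟨γ', hγ', ht'⟩ := Kp_exists_tendsto f hw ha hy'
  set cs : ℕ → ℝ := fun n => min (max c (min (γ n).2 ((γ' n).2))) (max (γ n).2 ((γ' n).2))
    with hcs
  have hcmem : ∀ n, cs n ∈ uIcc (γ n).2 ((γ' n).2) := fun n => clamp_mem _ _ _
  have hξ := fun n => Gam_key f hw a b n (hγ n) (hγ' n) (cs n) (hcmem n)
  choose ξ hξu hξmem using hξ
  obtain ⟨z, hz, htz⟩ := Kp_lim f hSV hw ha hb (γ := fun n => (ξ n, cs n)) hξmem
  have ht2 : Filter.Tendsto (fun n => (γ n).2) (UF : Filter ℕ) (nhds y) :=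
    (continuous_snd.tendsto _).comp ht
  have ht2' : Filter.Tendsto (fun n => (γ' n).2) (UF : Filter ℕ) (nhds y') :=
    (continuous_snd.tendsto _).comp ht'
  have htc : Filter.Tendsto cs (UF : Filter ℕ) (nhds c) := by
    have h := ((tendsto_const_nhds (x := c) (f := (UF : Filter ℕ))).max
      (ht2.min ht2')).min (ht2.max ht2')
    have heq : min (max c (min y y')) (max y y') = c :=
      clamp_eq (le_trans (min_le_left _ _) hcl) (le_trans hcu (le_max_right _ _))
    rwa [heq] at h
  have ht1 : Filter.Tendsto (fun n => (γ n).1) (UF : Filter ℕ) (nhds x) :=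
    (continuous_fst.tendsto _).comp ht
  have ht1' : Filter.Tendsto (fun n => (γ' n).1) (UF : Filter ℕ) (nhds x) :=
    (continuous_fst.tendsto _).comp ht'
  have hz1 : Filter.Tendsto (fun n => ξ n) (UF : Filter ℕ) (nhds z.1) :=
    (continuous_fst.tendsto _).comp htz
  have hz2 : Filter.Tendsto cs (UF : Filter ℕ) (nhds z.2) :=
    (continuous_snd.tendsto _).comp htz
  have hzx : z.1 ∈ uIcc x x := uIcc_lim hξu hz1 ht1 ht1'
  rw [uIcc_self, mem_singleton_iff] at hzx
  have hzc : z.2 = c := tendsto_nhds_unique hz2 htc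
  have : (x, c) = z := Prod.ext hzx.symm hzc.symm
  rwa [this]

lemma Kp_wivp_step (hSV : SV f) (hw : WIVP f) {a b : ℝ} (ha : a ∈ Icc (0:ℝ) 1)
    (hb : b ∈ f a) {x₁ x₂ y₁ : ℝ} (hx₁ : x₁ ∈ Icc (0:ℝ) 1) (hx₂ : x₂ ∈ Icc (0:ℝ) 1)
    (hy₁ : (x₁, y₁) ∈ Kp f hw a b) :
    ∃ y₂, (x₂, y₂) ∈ Kp f hw a b ∧ ∀ y ∈ uIcc y₁ y₂,
      ∃ x ∈ uIcc x₁ x₂, (x, y) ∈ Kp f hw a b := by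
  obtain ⟨γ, hγ, ht⟩ := Kp_exists_tendsto f hw ha hy₁
  have hsp := fun n => Gam_span f hw ha hb n hx₂
  choose ys hys using hsp
  obtain ⟨z, hz, htz⟩ := Kp_lim f hSV hw ha hb (γ := fun n => (x₂, ys n)) hys
  have hz1 : z.1 = x₂ := tendsto_nhds_unique ((continuous_fst.tendsto _).comp htz)
    tendsto_const_nhds
  set y₂ := z.2 with hy₂def
  have hzeq : (x₂, y₂) = z := Prod.ext hz1.symm rfl
  refine ⟨y₂, by rwa [hzeq], ?_⟩
  intro y hyI
  set cs : ℕ → ℝ := fun n => min (max y (min (γ n).2 (ys n))) (max (γ n).2 (ys n))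
    with hcs
  have hcmem : ∀ n, cs n ∈ uIcc (γ n).2 (ys n) := fun n => clamp_mem _ _ _
  have hξ := fun n => Gam_key f hw a b n (hγ n) (hys n) (cs n) (hcmem n)
  choose ξ hξu hξmem using hξ
  obtain ⟨w, hwK, htw⟩ := Kp_lim f hSV hw ha hb (γ := fun n => (ξ n, cs n)) hξmem
  have ht2 : Filter.Tendsto (fun n => (γ n).2) (UF : Filter ℕ) (nhds y₁) :=
    (continuous_snd.tendsto _).comp ht
  have hts : Filter.Tendsto ys (UF : Filter ℕ) (nhds y₂) :=
    (continuous_snd.tendsto _).comp htz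
  have htc : Filter.Tendsto cs (UF : Filter ℕ) (nhds y) := by
    have h := ((tendsto_const_nhds (x := y) (f := (UF : Filter ℕ))).max
      (ht2.min hts)).min (ht2.max hts)
    have hyI' := hyI
    rw [uIcc, mem_Icc] at hyI'
    have heq : min (max y (min y₁ y₂)) (max y₁ y₂) = y := clamp_eq hyI'.1 hyI'.2
    rwa [heq] at h
  have hw2 : w.2 = y := tendsto_nhds_unique ((continuous_snd.tendsto _).comp htw) htc
  have ht1 : Filter.Tendsto (fun n => (γ n).1) (UF : Filter ℕ) (nhds x₁) :=
    (continuous_fst.tendsto _).comp ht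
  have hw1 : w.1 ∈ uIcc x₁ x₂ :=
    uIcc_lim hξu ((continuous_fst.tendsto _).comp htw) ht1 tendsto_const_nhds
  refine ⟨w.1, hw1, ?_⟩
  have : (w.1, y) = w := Prod.ext rfl hw2.symm
  rwa [this]


/-! ### the decomposing multifunctions -/

noncomputable def gm (hw : WIVP f) (a b : ℝ) : ℝ → Set ℝ :=
  fun x => {y | (x, y) ∈ Kp f hw a b}

lemma Graph_gm (hSV : SV f) (hw : WIVP f) {a b : ℝ} (ha : a ∈ Icc (0:ℝ) 1)
    (hb : b ∈ f a) : SVGraph (gm f hw a b) = Kp f hw a b := by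
  ext q
  constructor
  · rintro ⟨h1, h2⟩
    have h2' : (q.1, q.2) ∈ Kp f hw a b := h2
    rwa [Prod.mk.eta] at h2'
  · intro hq
    refine ⟨(Kp_subset_sq f hSV hw ha hb hq).1, ?_⟩
    show (q.1, q.2) ∈ Kp f hw a b
    rwa [Prod.mk.eta]

lemma usc_gm (hSV : SV f) (hw : WIVP f) {a b : ℝ} (ha : a ∈ Icc (0:ℝ) 1)
    (hb : b ∈ f a) : USC (gm f hw a b) := by
  intro x hx U hU hsub
  set C := Kp f hw a b ∩ ((univ : Set ℝ) ×ˢ Uᶜ) with hC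
  have hCcomp : IsCompact C :=
    (Kp_compact f hSV hw ha hb).inter_right (isClosed_univ.prod hU.isClosed_compl)
  have himg : IsClosed (Prod.fst '' C) := (hCcomp.image continuous_fst).isClosed
  refine ⟨(Prod.fst '' C)ᶜ, himg.isOpen_compl, ?_, ?_⟩
  · intro hmem
    obtain ⟨q, ⟨hqK, _, hq2⟩, hq1⟩ := hmem
    apply hq2
    apply hsub
    show (x, q.2) ∈ Kp f hw a b
    have : (x, q.2) = q := Prod.ext hq1.symm rfl
    rwa [this]
  · rintro v ⟨hv, hvIcc⟩ y hy
    by_contra hyU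
    exact hv ⟨(v, y), ⟨hy, trivial, hyU⟩, rfl⟩

lemma values_gm (hSV : SV f) (hw : WIVP f) {a b : ℝ} (ha : a ∈ Icc (0:ℝ) 1)
    (hb : b ∈ f a) : ∀ x ∈ Icc (0:ℝ) 1, (gm f hw a b x).Nonempty ∧
      IsCompact (gm f hw a b x) ∧ IsConnected (gm f hw a b x) ∧
      gm f hw a b x ⊆ Icc (0:ℝ) 1 := by
  intro x hx
  have hne : (gm f hw a b x).Nonempty := Kp_span f hSV hw ha hb hx
  have hclosed : IsClosed (gm f hw a b x) :=
    (Kp_closed f hw a b).preimage (Continuous.prodMk_right x)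
  have hsub : gm f hw a b x ⊆ Icc (0:ℝ) 1 := fun y hy =>
    (Kp_subset_sq f hSV hw ha hb hy).2
  have hcomp := IsCompact.of_isClosed_subset isCompact_Icc hclosed hsub
  have hord : OrdConnected (gm f hw a b x) := by
    constructor
    intro y hy y' hy' c hc
    exact Kp_fiber_ordconn f hSV hw ha hb hy hy' hc.1 hc.2
  exact ⟨hne, hcomp, ⟨hne, hord.isPreconnected⟩, hsub⟩

lemma wivp_gm (hSV : SV f) (hw : WIVP f) {a b : ℝ} (ha : a ∈ Icc (0:ℝ) 1)
    (hb : b ∈ f a) : WIVP (gm f hw a b) := by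
  intro x₁ hx₁ x₂ hx₂ hne y₁ hy₁
  obtain ⟨y₂, h2, hcov⟩ := Kp_wivp_step f hSV hw ha hb hx₁ hx₂ hy₁
  exact ⟨y₂, h2, hcov⟩

end Stmt15

theorem stmt15 (f : ℝ → Set ℝ) (hSV : SV f) (husc : USC f)
    (hconn : IsConnected (SVGraph f)) (hwivp : WIVP f) :
    ∃ F : Set (ℝ → Set ℝ),
      (∀ g ∈ F, USC g ∧
        (∀ x ∈ Icc (0:ℝ) 1,
          (g x).Nonempty ∧ IsCompact (g x) ∧ IsConnected (g x) ∧ g x ⊆ Icc (0:ℝ) 1) ∧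
        WIVP g) ∧
      SVGraph f = ⋃ g ∈ F, SVGraph g := by
  classical
  refine ⟨{g | ∃ p : ℝ × ℝ, p ∈ SVGraph f ∧ g = Stmt15.gm f hwivp p.1 p.2}, ?_, ?_⟩
  · rintro g ⟨p, hp, rfl⟩
    exact ⟨Stmt15.usc_gm f hSV hwivp hp.1 hp.2,
      Stmt15.values_gm f hSV hwivp hp.1 hp.2,
      Stmt15.wivp_gm f hSV hwivp hp.1 hp.2⟩
  · ext q
    constructor
    · intro hq
      refine mem_iUnion₂.2 ⟨Stmt15.gm f hwivp q.1 q.2, ⟨q, hq, rfl⟩, ?_⟩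
      rw [Stmt15.Graph_gm f hSV hwivp hq.1 hq.2]
      have := Stmt15.mem_Kp_self f hwivp (b := q.2) hq.1
      rwa [Prod.mk.eta] at this
    · intro hq
      obtain ⟨g, hgF, hqg⟩ := mem_iUnion₂.1 hq
      obtain ⟨p, hp, rfl⟩ := hgF
      rw [Stmt15.Graph_gm f hSV hwivp hp.1 hp.2] at hqg
      exact Stmt15.Kp_subset_graph f hSV husc hwivp hp.1 hp.2 hqg
end
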